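/- arXiv:2511.18118 — 7 statements merged into one kernel-verified Lean document; each statement's English description precedes it below -/
import Mathlib

section
/- For every ε > 0, every ν ∈ ℂ with Re(ν) > 1 and every x ∈ ℝ: the Lebesgue integral ∫_ℝ e^{i x ξ} · (ε + i ξ)^{−ν} dξ equals (2π/Γ(ν)) · x^{ν−1} · e^{−ε x} if x > 0, and equals 0 if x < 0. Here x^{ν−1} is the principal complex power of the positive real x, (ε + iξ)^{−ν} is the principal complex power, and the integrand is absolutely integrable since Re(ν) > 1. -/
set_option maxHeartbeats 1000000

open MeasureTheory Set Filter Topology Complex Metric Real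
open scoped FourierTransform

lemma contOn_kernel (ν b : ℂ) :
    ContinuousOn (fun t : ℝ => (t : ℂ) ^ (ν - 1) * Complex.exp (-(b * t))) (Ioi 0) := by
  apply ContinuousOn.mul
  · intro t ht
    exact ((continuousAt_cpow_const
        (Complex.ofReal_mem_slitPlane.mpr ht)).comp
      Complex.continuous_ofReal.continuousAt).continuousWithinAt
  · exact (Complex.continuous_exp.comp (by fun_prop)).continuousOn

lemma integrableOn_kernel {ν : ℂ} (hν : 0 < ν.re) {b : ℂ} (hb : 0 < b.re) :
    IntegrableOn (fun t : ℝ => (t : ℂ) ^ (ν - 1) * Complex.exp (-(b * t))) (Ioi 0) := by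
  have h0 : IntegrableOn (fun t : ℝ => Real.exp (-(b.re * t)) * t ^ (ν.re - 1)) (Ioi 0) := by
    have h1 := Real.GammaIntegral_convergent hν
    rw [← mul_zero b.re, ← integrableOn_Ioi_comp_mul_left_iff _ _ hb] at h1
    refine IntegrableOn.congr_fun (h1.const_mul ((b.re) ^ (1 - ν.re))) (fun t ht => ?_) measurableSet_Ioi
    rw [mem_Ioi] at ht
    rw [Real.mul_rpow hb.le ht.le]
    rw [show b.re ^ (1-ν.re) * (Real.exp (-(b.re*t)) * (b.re ^ (ν.re-1) * t ^ (ν.re-1)))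
      = (b.re ^ (1-ν.re) * b.re ^ (ν.re-1)) * (Real.exp (-(b.re*t)) * t ^ (ν.re-1)) by ring,
      ← Real.rpow_add hb]
    norm_num
  refine ⟨(contOn_kernel ν b).aestronglyMeasurable measurableSet_Ioi, h0.2.congr' ?_⟩
  filter_upwards [self_mem_ae_restrict measurableSet_Ioi] with t ht
  rw [mem_Ioi] at ht
  rw [Real.norm_eq_abs, _root_.abs_of_nonneg (by positivity), norm_mul,
    Complex.norm_cpow_eq_rpow_re_of_pos ht, Complex.norm_exp]
  simp [mul_comm, Complex.sub_re, Complex.one_re]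

lemma key {ν : ℂ} (hν : 0 < ν.re) {b : ℂ} (hb : 0 < b.re) :
    ∫ t in Ioi (0:ℝ), (t : ℂ) ^ (ν - 1) * Complex.exp (-(b * t))
      = b ^ (-ν) * Complex.Gamma ν := by
  set U : Set ℂ := {z | 0 < z.re} with hUdef
  have hUopen : IsOpen U := isOpen_lt continuous_const Complex.continuous_re
  have hUconv : Convex ℝ U := convex_halfSpace_re_gt 0
  set F : ℂ → ℂ := fun b => ∫ t in Ioi (0:ℝ), (t : ℂ) ^ (ν - 1) * Complex.exp (-(b * t)) with hF
  set G : ℂ → ℂ := fun b => b ^ (-ν) * Complex.Gamma ν with hG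
  have hGdiff : DifferentiableOn ℂ G U := by
    intro z hz
    exact ((differentiableAt_id.cpow (differentiableAt_const _)
      (Or.inl hz)).mul_const _).differentiableWithinAt
  have hFdiff : DifferentiableOn ℂ F U := by
    intro z hz
    have hz' : 0 < z.re := hz
    have hball : 0 < z.re / 2 := by linarith
    have hre2 : (0:ℝ) < ((z.re/2 : ℝ) : ℂ).re := by simpa using hball
    have key := hasDerivAt_integral_of_dominated_loc_of_deriv_le
      (F := fun (w : ℂ) (t : ℝ) => (t : ℂ) ^ (ν - 1) * Complex.exp (-(w * t)))
      (F' := fun (w : ℂ) (t : ℝ) => (t : ℂ) ^ (ν - 1) * (Complex.exp (-(w * t)) * (-t)))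
      (x₀ := z) (μ := volume.restrict (Ioi 0))
      (bound := fun t : ℝ => ‖(t : ℂ) ^ ((ν + 1) - 1) * Complex.exp (-(((z.re/2 : ℝ) : ℂ) * t))‖)
      (Metric.ball_mem_nhds z hball) ?_ ?_ ?_ ?_ ?_ ?_
    · exact key.2.differentiableAt.differentiableWithinAt
    · filter_upwards with w
      exact ((contOn_kernel ν w).aestronglyMeasurable measurableSet_Ioi)
    · exact integrableOn_kernel hν hz'
    · exact ((contOn_kernel ν z).mul
        ((Complex.continuous_ofReal.comp continuous_neg).continuousOn.mono
          (fun t _ => trivial))).aestronglyMeasurable measurableSet_Ioi |>.congr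
        (by
          filter_upwards [self_mem_ae_restrict measurableSet_Ioi] with t _
          simp only [Pi.mul_apply, Function.comp_apply]
          push_cast
          ring)
    · -- bound
      filter_upwards [self_mem_ae_restrict measurableSet_Ioi] with t ht
      intro w hw
      rw [mem_Ioi] at ht
      have hwre : z.re / 2 ≤ w.re := by
        have h1 : |w.re - z.re| ≤ ‖w - z‖ := by
          simpa using Complex.abs_re_le_norm (w - z)
        have h2 : ‖w - z‖ < z.re / 2 := by
          simpa [Complex.dist_eq] using hw
        have := (abs_le.mp h1).1
        linarith
      simp only [norm_mul, norm_neg,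
        Complex.norm_cpow_eq_rpow_re_of_pos ht, Complex.norm_exp, Complex.norm_real, Real.norm_eq_abs]
      have hre1 : (-(w * t)).re = -(w.re * t) := by
        simp [Complex.mul_re]
      have hre2' : (-(((z.re/2 : ℝ) : ℂ) * t)).re = -(z.re/2 * t) := by
        simp [Complex.mul_re]
      rw [hre1, hre2', _root_.abs_of_nonneg ht.le]
      have hrepow : ((ν + 1) - 1).re = (ν - 1).re + 1 := by
        simp [Complex.add_re, Complex.sub_re, Complex.one_re]
      rw [hrepow, Real.rpow_add ht, Real.rpow_one]
      have hexp : Real.exp (-(w.re * t)) ≤ Real.exp (-(z.re/2 * t)) := by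
        apply Real.exp_le_exp.mpr
        nlinarith
      have h0 : 0 ≤ t ^ (ν - 1).re * t := by positivity
      have hrg : t ^ (ν - 1).re * (Real.exp (-(w.re * t)) * t)
          = t ^ (ν - 1).re * t * Real.exp (-(w.re * t)) := by ring
      rw [hrg]
      exact mul_le_mul_of_nonneg_left hexp h0
    · exact (integrableOn_kernel (by simp [Complex.add_re]; linarith) hre2).norm
    · filter_upwards [self_mem_ae_restrict measurableSet_Ioi] with t _
      intro w _
      have h1 : HasDerivAt (fun w : ℂ => -(w * (t:ℂ))) (-(t:ℂ)) w :=
        (hasDerivAt_mul_const (t:ℂ)).neg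
      have h2 := h1.cexp
      simpa using h2.const_mul ((t:ℂ) ^ (ν - 1))
  have hFan : AnalyticOnNhd ℂ F U := hFdiff.analyticOnNhd hUopen
  have hGan : AnalyticOnNhd ℂ G U := hGdiff.analyticOnNhd hUopen
  have hreal : ∀ r : ℝ, 0 < r → F r = G r := by
    intro r hr
    have := Complex.integral_cpow_mul_exp_neg_mul_Ioi hν hr
    rw [hF, hG]
    simp only
    rw [this, one_div, inv_cpow _ _ (by rw [Complex.arg_ofReal_of_nonneg hr.le]; positivity),
      ← Complex.cpow_neg]
  have hfreq : ∃ᶠ z in 𝓝[≠] (1 : ℂ), F z = G z := by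
    have hu : Tendsto (fun n : ℕ => ((1 + ((n:ℝ)+1)⁻¹ : ℝ) : ℂ)) atTop (𝓝[≠] 1) := by
      apply tendsto_nhdsWithin_of_tendsto_nhds_of_eventually_within
      · have h0 : Tendsto (fun n : ℕ => (1 + ((n:ℝ)+1)⁻¹ : ℝ)) atTop (𝓝 1) := by
          simpa using ((tendsto_one_div_add_atTop_nhds_zero_nat (𝕜 := ℝ)).const_add 1)
        have h3 : Tendsto (fun n : ℕ => ((1 + ((n:ℝ)+1)⁻¹ : ℝ) : ℂ)) atTop (𝓝 ((1:ℝ):ℂ)) :=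
          (Complex.continuous_ofReal.tendsto 1).comp h0
        simpa using h3
      · filter_upwards with n
        simp only [mem_compl_iff, mem_singleton_iff]
        intro h
        have : (1 + ((n:ℝ)+1)⁻¹ : ℝ) = 1 := by exact_mod_cast h
        have : ((n:ℝ)+1)⁻¹ = 0 := by linarith
        exact (by positivity : (0:ℝ) < ((n:ℝ)+1)⁻¹).ne' this
    exact hu.frequently (Frequently.of_forall fun n => hreal _ (by positivity))
  have heq : EqOn F G U :=
    hFan.eqOn_of_preconnected_of_frequently_eq hGan hUconv.isPreconnected
      (by simp [hUdef] : (1:ℂ) ∈ U) hfreq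
  exact heq hb

noncomputable def myf (ν : ℂ) (ε : ℝ) : ℝ → ℂ :=
  Set.indicator (Ioi 0) (fun t : ℝ => (t : ℂ) ^ (ν - 1) * Complex.exp (-((ε : ℂ) * t)))


section
variable {ε : ℝ} {ν : ℂ}

lemma myf_integrable (hν : 1 < ν.re) (hε : 0 < ε) : Integrable (myf ν ε) := by
  rw [myf, integrable_indicator_iff measurableSet_Ioi]
  exact integrableOn_kernel (by linarith) (by simpa using hε)

lemma fourier_myf (hν : 1 < ν.re) (hε : 0 < ε) (ξ : ℝ) :
    𝓕 (myf ν ε) ξ = ((ε : ℂ) + ((2 * π * ξ : ℝ) : ℂ) * Complex.I) ^ (-ν) * Complex.Gamma ν := by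
  set b : ℂ := (ε : ℂ) + ((2 * π * ξ : ℝ) : ℂ) * Complex.I with hbdef
  have hbre : 0 < b.re := by simp [hbdef, hε]
  rw [Real.fourier_real_eq_integral_exp_smul]
  have h1 : ∀ v : ℝ, Complex.exp (↑(-2 * π * v * ξ) * Complex.I) • myf ν ε v
      = Set.indicator (Ioi 0) (fun v : ℝ => (v : ℂ) ^ (ν - 1) * Complex.exp (-(b * v))) v := by
    intro v
    rw [myf]
    by_cases h : v ∈ Ioi 0
    · rw [Set.indicator_of_mem h, Set.indicator_of_mem h, smul_eq_mul, ← mul_assoc,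
        mul_comm (Complex.exp _) ((v:ℂ) ^ (ν - 1)), mul_assoc, ← Complex.exp_add]
      congr 2
      rw [hbdef]
      push_cast
      ring
    · rw [Set.indicator_of_notMem h, Set.indicator_of_notMem h, smul_zero]
  simp_rw [h1]
  rw [integral_indicator measurableSet_Ioi]
  exact key (by linarith) hbre

lemma fourier_myf_integrable (hν : 1 < ν.re) (hε : 0 < ε) : Integrable (𝓕 (myf ν ε)) := by
  have hfun : 𝓕 (myf ν ε) = fun ξ : ℝ =>
      ((ε : ℂ) + ((2 * π * ξ : ℝ) : ℂ) * Complex.I) ^ (-ν) * Complex.Gamma ν :=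
    funext (fourier_myf hν hε)
  rw [hfun]
  apply Integrable.mul_const
  set c : ℝ := min ε (2 * π) / 2 with hc
  have hπ : (0:ℝ) < 2 * π := by positivity
  have hcpos : 0 < c := by
    rw [hc]
    have := lt_min_iff.mpr ⟨hε, hπ⟩
    positivity
  have hmaj : Integrable (fun ξ : ℝ =>
      (Real.exp (π * |ν.im|) * c ^ (-ν.re)) * (1 + ‖ξ‖) ^ (-ν.re)) := by
    exact (integrable_one_add_norm (by simpa using hν)).const_mul _
  refine Integrable.mono' hmaj ?_ ?_
  · apply Continuous.aestronglyMeasurable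
    apply continuous_iff_continuousAt.mpr
    intro ξ
    have hb : ((ε : ℂ) + ((2 * π * ξ : ℝ) : ℂ) * Complex.I) ∈ Complex.slitPlane := by
      apply Or.inl
      simp [hε]
    exact ContinuousAt.cpow (by fun_prop) continuousAt_const (by rw [Complex.mem_slitPlane_iff]; apply Or.inl; simpa using hε)
  · filter_upwards with ξ
    set b : ℂ := (ε : ℂ) + ((2 * π * ξ : ℝ) : ℂ) * Complex.I with hbdef
    have hbre : b.re = ε := by simp [hbdef]
    have hbne : b ≠ 0 := by
      intro h
      rw [h] at hbre
      simp at hbre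
      linarith
    have habs : c * (1 + ‖ξ‖) ≤ ‖b‖ := by
      have h2 : (c * (1 + ‖ξ‖))^2 ≤ (‖b‖)^2 := by
        rw [Complex.sq_norm, Complex.normSq_apply]
        have hre : b.re = ε := hbre
        have him : b.im = 2 * π * ξ := by simp [hbdef]
        rw [hre, him]
        have h3 : 2 * c ≤ ε := by
          rw [hc]
          have := min_le_left ε (2*π)
          linarith
        have h4 : c ≤ π := by
          rw [hc]
          have := min_le_right ε (2*π)
          linarith
        have hξ : ‖ξ‖ = |ξ| := rfl
        rw [hξ]
        have e1 : c^2 ≤ ε^2/4 := by nlinarith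
        have e2a : 2*c*c ≤ ε*π := mul_le_mul h3 h4 hcpos.le (by linarith)
        have e2 : 2*(c^2*|ξ|) ≤ ε*(π*|ξ|) := by nlinarith [mul_le_mul_of_nonneg_right e2a (abs_nonneg ξ)]
        have e3a : c*c ≤ π*π := mul_le_mul h4 h4 hcpos.le (by positivity)
        have e3 : c^2*|ξ|^2 ≤ π^2*ξ^2 := by nlinarith [mul_le_mul_of_nonneg_right e3a (sq_nonneg ξ), _root_.sq_abs ξ]
        nlinarith [e1, e2, e3, sq_nonneg (ε - 2*π*|ξ|), _root_.sq_abs ξ, abs_nonneg ξ, Real.pi_pos]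
      have hs := Real.sqrt_le_sqrt h2
      rwa [Real.sqrt_sq (by positivity), Real.sqrt_sq (norm_nonneg b)] at hs
    rw [Complex.norm_cpow_of_ne_zero hbne]
    set t : ℝ := Complex.arg b * (-ν).im with ht
    have hexp : Real.exp (-t) ≤ Real.exp (π * |ν.im|) := by
      apply Real.exp_le_exp.mpr
      have h1 : |t| ≤ π * |ν.im| := by
        rw [ht, abs_mul, Complex.neg_im, abs_neg]
        exact mul_le_mul_of_nonneg_right (Complex.abs_arg_le_pi b) (abs_nonneg _)
      have := neg_abs_le t
      linarith
    have h6 : ‖b‖ ^ (-ν).re ≤ (c * (1 + ‖ξ‖)) ^ (-ν.re) := by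
      rw [Complex.neg_re]
      exact Real.rpow_le_rpow_of_nonpos (by positivity) habs (by linarith)
    calc ‖b‖ ^ (-ν).re / Real.exp t
        = ‖b‖ ^ (-ν).re * Real.exp (-t) := by
          rw [div_eq_mul_inv, ← Real.exp_neg]
      _ ≤ (c * (1 + ‖ξ‖)) ^ (-ν.re) * Real.exp (π * |ν.im|) :=
          mul_le_mul h6 hexp (Real.exp_pos _).le (by positivity)
      _ = Real.exp (π * |ν.im|) * c ^ (-ν.re) * (1 + ‖ξ‖) ^ (-ν.re) := by
          rw [Real.mul_rpow hcpos.le (by positivity)]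
          ring

lemma myf_continuousAt {x : ℝ} (hx : x ≠ 0) : ContinuousAt (myf ν ε) x := by
  rcases hx.lt_or_gt with h | h
  · have hev : (0 : ℝ → ℂ) =ᶠ[𝓝 x] myf ν ε := by
      filter_upwards [isOpen_Iio.mem_nhds h] with t ht
      rw [myf, Set.indicator_of_notMem (by simp at ht ⊢; linarith)]
      rfl
    exact continuousAt_const.congr hev
  · have hev : (fun t : ℝ => (t : ℂ) ^ (ν - 1) * Complex.exp (-((ε : ℂ) * t))) =ᶠ[𝓝 x]
        myf ν ε := by
      filter_upwards [isOpen_Ioi.mem_nhds h] with t ht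
      rw [myf, Set.indicator_of_mem ht]
    exact ((contOn_kernel ν ε).continuousAt (isOpen_Ioi.mem_nhds h)).congr hev

lemma inv_eq (hν : 1 < ν.re) (hε : 0 < ε) {x : ℝ} (hx : x ≠ 0) :
    ∫ ξ : ℝ, Complex.exp (((2 * π * ξ * x : ℝ) : ℂ) * Complex.I) * 𝓕 (myf ν ε) ξ
      = myf ν ε x := by
  have h := (myf_integrable hν hε).fourierInv_fourier_eq (fourier_myf_integrable hν hε)
    (myf_continuousAt hx)
  rw [← h, Real.fourierInv_eq_fourier_neg,
    Real.fourier_real_eq_integral_exp_smul]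
  simp_rw [show ∀ ξ : ℝ, -2 * π * ξ * -x = 2 * π * ξ * x from fun ξ => by ring, smul_eq_mul]

lemma cov (x : ℝ) :
    (∫ ξ : ℝ, Complex.exp (Complex.I * (x:ℂ) * (ξ:ℂ)) * ((ε : ℂ) + Complex.I * (ξ:ℂ)) ^ (-ν))
      = ((2 * π : ℝ) : ℂ) *
        ∫ ξ : ℝ, Complex.exp (((2 * π * ξ * x : ℝ) : ℂ) * Complex.I) *
          ((ε : ℂ) + ((2 * π * ξ : ℝ) : ℂ) * Complex.I) ^ (-ν) := by
  have h := MeasureTheory.Measure.integral_comp_mul_left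
    (g := fun ξ : ℝ => Complex.exp (Complex.I * (x:ℂ) * (ξ:ℂ)) *
      ((ε : ℂ) + Complex.I * (ξ:ℂ)) ^ (-ν)) (2 * π)
  have h2 : ∀ ξ : ℝ, Complex.exp (Complex.I * (x:ℂ) * ((2*π*ξ : ℝ):ℂ)) *
      ((ε : ℂ) + Complex.I * ((2*π*ξ : ℝ):ℂ)) ^ (-ν)
      = Complex.exp (((2 * π * ξ * x : ℝ) : ℂ) * Complex.I) *
        ((ε : ℂ) + ((2 * π * ξ : ℝ) : ℂ) * Complex.I) ^ (-ν) := by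
    intro ξ
    rw [show Complex.I * (x:ℂ) * ((2*π*ξ : ℝ):ℂ) = ((2 * π * ξ * x : ℝ) : ℂ) * Complex.I by
      push_cast; ring,
      show (ε : ℂ) + Complex.I * ((2*π*ξ : ℝ):ℂ) = (ε : ℂ) + ((2 * π * ξ : ℝ) : ℂ) * Complex.I by
      ring]
  simp_rw [h2] at h
  rw [h, abs_of_pos (by positivity : (0:ℝ) < (2*π)⁻¹), real_smul]
  push_cast
  rw [← mul_assoc, mul_inv_cancel₀ (show ((2:ℂ)*(π:ℝ)) ≠ 0 by
    simp [Real.pi_ne_zero]), one_mul]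
end


/-- For every `ε > 0`, every `ν ∈ ℂ` with `Re ν > 1` and every `x ∈ ℝ`:
`∫_ℝ e^{ixξ} (ε+iξ)^{-ν} dξ = (2π/Γ(ν)) x^{ν-1} e^{-εx}` if `x > 0`, and `= 0` if `x < 0`,
with principal complex powers. -/
theorem stmt_1 (ε : ℝ) (hε : 0 < ε) (ν : ℂ) (hν : 1 < ν.re) (x : ℝ) :
    (0 < x →
      (∫ ξ : ℝ, Complex.exp (Complex.I * (x : ℂ) * (ξ : ℂ)) *
          ((ε : ℂ) + Complex.I * (ξ : ℂ)) ^ (-ν)) =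
        (2 * (Real.pi : ℂ) / Complex.Gamma ν) * (x : ℂ) ^ (ν - 1) *
          (Real.exp (-(ε * x)) : ℂ)) ∧
    (x < 0 →
      (∫ ξ : ℝ, Complex.exp (Complex.I * (x : ℂ) * (ξ : ℂ)) *
          ((ε : ℂ) + Complex.I * (ξ : ℂ)) ^ (-ν)) = 0) := by
  have hΓ : Complex.Gamma ν ≠ 0 := by
    apply Complex.Gamma_ne_zero
    intro m h
    rw [h] at hν
    simp only [Complex.neg_re, Complex.natCast_re] at hν
    have : (0:ℝ) ≤ m := Nat.cast_nonneg m
    linarith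
  have main : ∀ x : ℝ, x ≠ 0 →
      (∫ ξ : ℝ, Complex.exp (Complex.I * (x : ℂ) * (ξ : ℂ)) *
          ((ε : ℂ) + Complex.I * (ξ : ℂ)) ^ (-ν))
        = ((2 * π : ℝ) : ℂ) * myf ν ε x / Complex.Gamma ν := by
    intro x hx0
    rw [cov x]
    have hinv := inv_eq (ε := ε) hν hε hx0
    simp_rw [fourier_myf hν hε, ← mul_assoc] at hinv
    rw [integral_mul_const] at hinv
    rw [show (∫ ξ:ℝ, Complex.exp (((2 * π * ξ * x : ℝ) : ℂ) * Complex.I) *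
        ((ε : ℂ) + ((2 * π * ξ : ℝ) : ℂ) * Complex.I) ^ (-ν)) = myf ν ε x / Complex.Gamma ν by
      rw [eq_div_iff hΓ]
      exact hinv]
    ring
  constructor
  · intro hx
    rw [main x hx.ne', myf, Set.indicator_of_mem (mem_Ioi.mpr hx)]
    rw [show Complex.exp (-((ε:ℂ) * x)) = ((Real.exp (-(ε * x)) : ℝ) : ℂ) by
      rw [Complex.ofReal_exp]; push_cast; ring_nf]
    push_cast
    field_simp
  · intro hx
    rw [main x hx.ne, myf, Set.indicator_of_notMem (by simp; linarith)]
    simp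
end

section
/- For every h ∈ ℂ with Re(h) > 0, every ε > 0 and every x ∈ ℝ with x ≠ 0, one has ∫_ℝ K_h^ε(ξ) · e^{i ξ x} dξ = |x|^h · e^{−ε|x|}, where |x|^h is the principal complex power of the positive real |x|; the integrand on the left is absolutely integrable since Re(h) > 0. -/
open MeasureTheory Set Complex Real

section Aux

lemma aux_integrableOn {s a : ℂ} (hs : 0 < s.re) (ha : 0 < a.re) :
    IntegrableOn (fun t : ℝ => (t : ℂ) ^ (s - 1) * Complex.exp (-(a * t))) (Set.Ioi 0) := by
  have hb : IntegrableOn (fun t : ℝ => t ^ (s.re - 1) * Real.exp (-a.re * t)) (Set.Ioi 0) := by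
    have := integrableOn_rpow_mul_exp_neg_mul_rpow (p := 1) (by linarith : (-1:ℝ) < s.re - 1)
      zero_lt_one ha
    simpa [Real.rpow_one] using this
  have hc : ContinuousOn (fun t : ℝ => (t : ℂ) ^ (s - 1) * Complex.exp (-(a * t))) (Set.Ioi 0) := by
    apply ContinuousOn.mul
    · apply ContinuousOn.cpow Complex.continuous_ofReal.continuousOn continuousOn_const
      intro t ht
      exact Or.inl (by simpa using ht)
    · exact (Complex.continuous_exp.comp
        ((continuous_const.mul Complex.continuous_ofReal).neg)).continuousOn
  refine hb.mono' (hc.aestronglyMeasurable measurableSet_Ioi) ?_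
  filter_upwards [ae_restrict_mem measurableSet_Ioi] with t ht
  have ht' : (0:ℝ) < t := ht
  rw [norm_mul, Complex.norm_cpow_eq_rpow_re_of_pos ht',
    Complex.norm_exp]
  simp [Complex.sub_re, Complex.mul_re, neg_mul]

lemma laplace_cpow {s : ℂ} (hs : 0 < s.re) :
    ∀ ⦃a : ℂ⦄, 0 < a.re →
      (∫ t : ℝ in Ioi 0, (t : ℂ) ^ (s - 1) * Complex.exp (-(a * t)))
        = Complex.Gamma s * a ^ (-s) := by
  set F : ℂ → ℂ := fun a => ∫ t : ℝ in Ioi 0, (t : ℂ) ^ (s - 1) * Complex.exp (-(a * t)) with hF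
  set G : ℂ → ℂ := fun a => Complex.Gamma s * a ^ (-s) with hG
  set U : Set ℂ := {z : ℂ | 0 < z.re} with hU
  have hUopen : IsOpen U := isOpen_lt continuous_const Complex.continuous_re
  -- differentiability of F on U
  have hFdiff : DifferentiableOn ℂ F U := by
    intro z₀ hz₀
    have hc : 0 < z₀.re := hz₀
    have key := hasDerivAt_integral_of_dominated_loc_of_deriv_le
      (μ := volume.restrict (Ioi (0:ℝ)))
      (F := fun z (t : ℝ) => (t : ℂ) ^ (s - 1) * Complex.exp (-(z * t)))
      (F' := fun z (t : ℝ) => (t : ℂ) ^ (s - 1) * (Complex.exp (-(z * t)) * (-(t : ℂ))))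
      (x₀ := z₀) (bound := fun t : ℝ => t ^ s.re * Real.exp (-(z₀.re / 2) * t))
      (Metric.ball_mem_nhds z₀ (half_pos hc)) ?_ ?_ ?_ ?_ ?_ ?_
    · exact (key.2.differentiableAt).differentiableWithinAt
    · -- measurability of F z
      filter_upwards [hUopen.mem_nhds hz₀] with z hz
      exact (aux_integrableOn hs hz).aestronglyMeasurable
    · exact aux_integrableOn hs hc
    · -- measurability of F' z₀
      have hcont : ContinuousOn
          (fun t : ℝ => (t : ℂ) ^ (s - 1) * (Complex.exp (-(z₀ * t)) * (-(t : ℂ))))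
          (Set.Ioi 0) := by
        apply ContinuousOn.mul
        · apply ContinuousOn.cpow Complex.continuous_ofReal.continuousOn continuousOn_const
          intro t ht
          exact Or.inl (by simpa using ht)
        · exact ((Complex.continuous_exp.comp
            ((continuous_const.mul Complex.continuous_ofReal).neg)).mul
            Complex.continuous_ofReal.neg).continuousOn
      exact hcont.aestronglyMeasurable measurableSet_Ioi
    · -- bound
      filter_upwards [ae_restrict_mem measurableSet_Ioi] with t ht z hz
      have ht' : (0:ℝ) < t := ht
      have hzre : z₀.re / 2 ≤ z.re := by
        have := Complex.abs_re_le_norm (z - z₀)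
        rw [Complex.sub_re] at this
        have hd : ‖z - z₀‖ < z₀.re / 2 := by
          simpa [Metric.mem_ball, Complex.dist_eq] using hz
        have := abs_lt.mp (lt_of_le_of_lt this hd)
        linarith [this.1]
      rw [norm_mul, norm_mul,
        Complex.norm_cpow_eq_rpow_re_of_pos ht', Complex.norm_exp]
      have : ‖(-(t:ℂ))‖ = t := by
        rw [norm_neg, Complex.norm_real, Real.norm_eq_abs, abs_of_pos ht']
      rw [this]
      have hre : (-(z * (t:ℂ))).re = -(z.re * t) := by
        simp [Complex.mul_re]
      rw [hre, Complex.sub_re, Complex.one_re]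
      have hrw : t ^ (s.re - 1) * t = t ^ s.re := by
        rw [← Real.rpow_add_one (ne_of_gt ht')]
        norm_num
      calc t ^ (s.re - 1) * (Real.exp (-(z.re * t)) * t)
          = t ^ s.re * Real.exp (-(z.re * t)) := by rw [← hrw]; ring
        _ ≤ t ^ s.re * Real.exp (-(z₀.re / 2) * t) := by
            apply mul_le_mul_of_nonneg_left _ (Real.rpow_nonneg ht'.le _)
            apply Real.exp_le_exp.2
            rw [neg_mul]
            apply neg_le_neg
            exact mul_le_mul_of_nonneg_right hzre ht'.le
    · -- bound integrable
      have := integrableOn_rpow_mul_exp_neg_mul_rpow (p := 1) (by linarith : (-1:ℝ) < s.re)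
        zero_lt_one (half_pos hc)
      simpa [Real.rpow_one, IntegrableOn] using this
    · -- HasDerivAt
      filter_upwards [ae_restrict_mem measurableSet_Ioi] with t ht z hz
      have h1 : HasDerivAt (fun z : ℂ => -(z * (t:ℂ))) (-(t:ℂ)) z :=
        (hasDerivAt_mul_const (t : ℂ)).neg
      exact (h1.cexp).const_mul ((t:ℂ) ^ (s - 1))
  have hGdiff : DifferentiableOn ℂ G U := by
    intro z hz
    exact ((differentiableAt_id.cpow (differentiableAt_const (-s))
      (Or.inl hz)).const_mul _).differentiableWithinAt
  have hreal : ∀ r : ℝ, 0 < r → F (r : ℂ) = G (r : ℂ) := by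
    intro r hr
    have h1 := Complex.integral_cpow_mul_exp_neg_mul_Ioi hs hr
    have h2 : ((1 : ℂ) / r) ^ s * Complex.Gamma s = Complex.Gamma s * (r : ℂ) ^ (-s) := by
      rw [one_div, Complex.inv_cpow _ _ ?_, ← Complex.cpow_neg, mul_comm]
      rw [Complex.arg_ofReal_of_nonneg hr.le]
      exact Ne.symm Real.pi_ne_zero
    simp only [hF, hG]
    rw [h1, h2]
  have hseq : Filter.Tendsto (fun n : ℕ => ((1 + (n + 1 : ℝ)⁻¹ : ℝ) : ℂ))
      Filter.atTop (nhdsWithin 1 {(1:ℂ)}ᶜ) := by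
    apply tendsto_nhdsWithin_of_tendsto_nhds_of_eventually_within
    · have : Filter.Tendsto (fun n : ℕ => (1 + (n + 1 : ℝ)⁻¹ : ℝ)) Filter.atTop (nhds 1) := by
        have h0 : Filter.Tendsto (fun n : ℕ => ((n + 1 : ℝ))⁻¹) Filter.atTop (nhds 0) :=
          tendsto_one_div_add_atTop_nhds_zero_nat.congr (by simp [one_div])
        simpa using tendsto_const_nhds.add h0
      have h2 := (Complex.continuous_ofReal.tendsto (1:ℝ)).comp this
      simpa [Function.comp_def] using h2
    · filter_upwards with n
      simp only [Set.mem_compl_iff, Set.mem_singleton_iff]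
      intro hcon
      have : (1 + (n + 1 : ℝ)⁻¹ : ℝ) = 1 := by exact_mod_cast hcon
      have hpos : (0:ℝ) < (n + 1 : ℝ)⁻¹ := by positivity
      linarith
  have hfreq : ∃ᶠ z in nhdsWithin 1 {(1:ℂ)}ᶜ, F z = G z := by
    apply hseq.frequently
    apply Filter.Frequently.of_forall
    intro n
    apply hreal
    have hpos : (0:ℝ) < (n + 1 : ℝ)⁻¹ := by positivity
    linarith
  have hEq : Set.EqOn F G U :=
    AnalyticOnNhd.eqOn_of_preconnected_of_frequently_eq
      (hFdiff.analyticOnNhd hUopen) (hGdiff.analyticOnNhd hUopen)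
      (convex_halfSpace_re_gt 0).isPreconnected (by simp [hU] : (1:ℂ) ∈ U) hfreq
  exact fun a ha => hEq ha

-- integrability of one-sided kernel, generic in c with c.re = 0, |c.im| = 1
lemma ker_integrableOn_Ioi {h : ℂ} (hh : 0 < h.re) {ε : ℝ} (hε : 0 < ε) {c : ℂ}
    (hcre : c.re = 0) (hcim : |c.im| = 1) :
    IntegrableOn (fun y : ℝ => ((ε : ℂ) + c * y) ^ (-(h + 1))) (Set.Ioi 1) := by
  have hne : ∀ y : ℝ, ((ε : ℂ) + c * y) ≠ 0 := by
    intro y hy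
    have : ((ε : ℂ) + c * y).re = ε := by
      simp [Complex.add_re, Complex.mul_re, hcre]
    rw [hy] at this
    simp at this
    exact hε.ne this
  have hcont : Continuous (fun y : ℝ => ((ε : ℂ) + c * y) ^ (-(h + 1))) := by
    apply Continuous.cpow (continuous_const.add (continuous_const.mul Complex.continuous_ofReal))
      continuous_const
    intro y
    left
    simp [Complex.add_re, Complex.mul_re, hcre, hε]
  have hbound : IntegrableOn
      (fun y : ℝ => Real.exp (π * |h.im|) * y ^ (-(1 + h.re))) (Set.Ioi 1) :=
    (integrableOn_Ioi_rpow_of_lt (by linarith) one_pos).const_mul _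
  refine hbound.mono' (hcont.aestronglyMeasurable.restrict) ?_
  filter_upwards [ae_restrict_mem measurableSet_Ioi] with y hy
  have hy1 : (1:ℝ) < y := hy
  have hy0 : (0:ℝ) < y := lt_trans one_pos hy1
  set z : ℂ := (ε : ℂ) + c * y with hz
  have habs : y ≤ ‖z‖ := by
    have him : z.im = c.im * y := by simp [hz, Complex.add_im, Complex.mul_im]
    calc y = |z.im| := by rw [him, abs_mul, hcim, one_mul, abs_of_pos hy0]
    _ ≤ ‖z‖ := Complex.abs_im_le_norm z
  rw [Complex.norm_cpow_of_ne_zero (hne y)]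
  have hwre : (-(h + 1)).re = -(1 + h.re) := by
    simp [Complex.add_re]; ring
  have hwim : (-(h + 1)).im = -h.im := by simp [Complex.add_im]
  rw [hwre, hwim, div_eq_mul_inv, ← Real.exp_neg]
  have h1 : ‖z‖ ^ (-(1 + h.re)) ≤ y ^ (-(1 + h.re)) :=
    Real.rpow_le_rpow_of_nonpos hy0 habs (by linarith)
  have h2 : Real.exp (-(z.arg * -h.im)) ≤ Real.exp (π * |h.im|) := by
    apply Real.exp_le_exp.2
    calc -(z.arg * -h.im) = z.arg * h.im := by ring
    _ ≤ |z.arg * h.im| := le_abs_self _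
    _ = |z.arg| * |h.im| := abs_mul _ _
    _ ≤ π * |h.im| := by
        apply mul_le_mul_of_nonneg_right (Complex.abs_arg_le_pi z) (abs_nonneg _)
  calc ‖z‖ ^ (-(1 + h.re)) * Real.exp (-(z.arg * -h.im))
      ≤ y ^ (-(1 + h.re)) * Real.exp (π * |h.im|) := by
        apply mul_le_mul h1 h2 (Real.exp_pos _).le (Real.rpow_nonneg hy0.le _)
    _ = Real.exp (π * |h.im|) * y ^ (-(1 + h.re)) := by ring

lemma ker_integrable {h : ℂ} (hh : 0 < h.re) {ε : ℝ} (hε : 0 < ε) {c : ℂ}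
    (hcre : c.re = 0) (hcim : |c.im| = 1) :
    Integrable (fun y : ℝ => ((ε : ℂ) + c * y) ^ (-(h + 1))) := by
  have hcont : Continuous (fun y : ℝ => ((ε : ℂ) + c * y) ^ (-(h + 1))) := by
    apply Continuous.cpow (continuous_const.add (continuous_const.mul Complex.continuous_ofReal))
      continuous_const
    intro y
    left
    simp [Complex.add_re, Complex.mul_re, hcre, hε]
  have h1 : IntegrableOn (fun y : ℝ => ((ε : ℂ) + c * y) ^ (-(h + 1))) (Set.Ioi 1) :=
    ker_integrableOn_Ioi hh hε hcre hcim
  have h2 : IntegrableOn (fun y : ℝ => ((ε : ℂ) + c * y) ^ (-(h + 1))) (Set.Icc (-1) 1) :=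
    hcont.integrableOn_Icc
  have h3 : IntegrableOn (fun y : ℝ => ((ε : ℂ) + c * y) ^ (-(h + 1))) (Set.Iic (-1)) := by
    rw [← Measure.map_neg_eq_self (volume : Measure ℝ)]
    have m : MeasurableEmbedding fun x : ℝ => -x := (Homeomorph.neg ℝ).measurableEmbedding
    rw [m.integrableOn_map_iff]
    simp only [Function.comp_def, neg_preimage, neg_Iic, neg_neg]
    rw [integrableOn_Ici_iff_integrableOn_Ioi]
    have := ker_integrableOn_Ioi hh hε (c := -c) (by simp [hcre]) (by simp [hcim])
    refine this.congr_fun (fun y hy => ?_) measurableSet_Ioi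
    push_cast
    ring_nf
  have : Set.Iic (-1:ℝ) ∪ (Set.Icc (-1) 1 ∪ Set.Ioi 1) = Set.univ := by
    ext z
    simp only [Set.mem_union, Set.mem_Iic, Set.mem_Icc, Set.mem_Ioi, Set.mem_univ, iff_true]
    rcases le_or_gt z (-1) with hz | hz
    · exact Or.inl hz
    rcases le_or_gt z 1 with hz' | hz'
    · exact Or.inr (Or.inl ⟨hz.le, hz'⟩)
    · exact Or.inr (Or.inr hz')
  rw [← integrableOn_univ, ← this]
  exact (h3.union (h2.union h1))

lemma f_integrableOn_Ioi {h : ℂ} (hh : 0 < h.re) {ε : ℝ} (hε : 0 < ε) :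
    IntegrableOn (fun t : ℝ => ((|t| : ℝ) : ℂ) ^ h * (Real.exp (-(ε * |t|)) : ℂ))
      (Set.Ioi 0) := by
  have := aux_integrableOn (s := h + 1) (a := (ε : ℂ)) (by simp; linarith) (by simp [hε])
  refine this.congr_fun (fun t ht => ?_) measurableSet_Ioi
  have ht' : (0:ℝ) < t := ht
  rw [abs_of_pos ht', add_sub_cancel_right, Complex.ofReal_exp]
  push_cast
  ring_nf

lemma f_integrable {h : ℂ} (hh : 0 < h.re) {ε : ℝ} (hε : 0 < ε) :
    Integrable (fun t : ℝ => ((|t| : ℝ) : ℂ) ^ h * (Real.exp (-(ε * |t|)) : ℂ)) := by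
  have h1 := f_integrableOn_Ioi hh hε
  have h2 : IntegrableOn (fun t : ℝ => ((|t| : ℝ) : ℂ) ^ h * (Real.exp (-(ε * |t|)) : ℂ))
      (Set.Iic 0) := by
    rw [← Measure.map_neg_eq_self (volume : Measure ℝ)]
    have m : MeasurableEmbedding fun x : ℝ => -x := (Homeomorph.neg ℝ).measurableEmbedding
    rw [m.integrableOn_map_iff]
    simp only [Function.comp_def, abs_neg, neg_preimage, neg_Iic, neg_zero]
    rw [integrableOn_Ici_iff_integrableOn_Ioi]
    exact h1
  rw [← integrableOn_univ, ← Set.Iic_union_Ioi (a := (0:ℝ))]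
  exact h2.union h1

lemma fourier_calc {h : ℂ} (hh : 0 < h.re) {ε : ℝ} (hε : 0 < ε) (y : ℝ) :
    (∫ t : ℝ, ((|t| : ℝ) : ℂ) ^ h * (Real.exp (-(ε * |t|)) : ℂ)
        * Complex.exp (-(Complex.I * y * t)))
      = Complex.Gamma (h + 1) *
        (((ε : ℂ) + Complex.I * y) ^ (-(h + 1)) + ((ε : ℂ) - Complex.I * y) ^ (-(h + 1))) := by
  set φ : ℝ → ℂ := fun t => ((|t| : ℝ) : ℂ) ^ h * (Real.exp (-(ε * |t|)) : ℂ)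
      * Complex.exp (-(Complex.I * y * t)) with hφdef
  have hφ : Integrable φ := by
    have hbd := (f_integrable hh hε).bdd_mul (c := 1)
      ((Complex.continuous_exp.comp
        ((continuous_const.mul Complex.continuous_ofReal).neg)).aestronglyMeasurable)
      (f := fun t : ℝ => Complex.exp (-(Complex.I * y * t))) ?_
    · exact hbd.congr (Filter.Eventually.of_forall fun t => by simp [hφdef]; ring)
    · refine Filter.Eventually.of_forall (fun t => ?_)
      rw [Complex.norm_exp]
      simp [Complex.mul_re]
  have hpos : (∫ t in Ioi 0, φ t) = Complex.Gamma (h + 1) *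
      ((ε : ℂ) + Complex.I * y) ^ (-(h + 1)) := by
    rw [← laplace_cpow (s := h + 1) (by simp; linarith)
        (a := (ε : ℂ) + Complex.I * y) (by simp [Complex.add_re, Complex.mul_re, hε])]
    apply setIntegral_congr_fun measurableSet_Ioi
    intro t ht
    have ht' : (0:ℝ) < t := ht
    simp only [hφdef, abs_of_pos ht', add_sub_cancel_right, Complex.ofReal_exp]
    rw [mul_assoc, ← Complex.exp_add]
    push_cast
    ring_nf
  have hneg : (∫ t in Iic 0, φ t) = Complex.Gamma (h + 1) *
      ((ε : ℂ) - Complex.I * y) ^ (-(h + 1)) := by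
    rw [show Set.Iic (0:ℝ) = Set.Iic (-0) by norm_num, ← integral_comp_neg_Ioi]
    rw [← laplace_cpow (s := h + 1) (by simp; linarith)
        (a := (ε : ℂ) - Complex.I * y) (by simp [Complex.sub_re, Complex.mul_re, hε])]
    apply setIntegral_congr_fun measurableSet_Ioi
    intro t ht
    have ht' : (0:ℝ) < t := ht
    simp only [hφdef, abs_neg, abs_of_pos ht', add_sub_cancel_right, Complex.ofReal_exp]
    rw [mul_assoc, ← Complex.exp_add]
    push_cast
    ring_nf
  rw [← intervalIntegral.integral_Iic_add_Ioi hφ.integrableOn hφ.integrableOn, hpos, hneg]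
  ring

end Aux

/-- For `ε > 0` and `w ∈ ℂ`, the kernel
`K_w^ε(t) = (Γ(1+w)/(2π)) ((ε+it)^{-(w+1)} + (ε-it)^{-(w+1)})`,
with principal complex powers. -/
noncomputable def K (w : ℂ) (ε : ℝ) (t : ℝ) : ℂ :=
  Complex.Gamma (1 + w) / (2 * (Real.pi : ℂ)) *
    (((ε : ℂ) + Complex.I * (t : ℂ)) ^ (-(w + 1)) +
      ((ε : ℂ) - Complex.I * (t : ℂ)) ^ (-(w + 1)))

/-- For every `h ∈ ℂ` with `Re h > 0`, every `ε > 0` and every `x ≠ 0`,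
`∫_ℝ K_h^ε(ξ) e^{iξx} dξ = |x|^h e^{-ε|x|}`. -/
theorem stmt_2 (h : ℂ) (hh : 0 < h.re) (ε : ℝ) (hε : 0 < ε) (x : ℝ) (hx : x ≠ 0) :
    (∫ ξ : ℝ, K h ε ξ * Complex.exp (Complex.I * (ξ : ℂ) * (x : ℂ))) =
      ((|x| : ℝ) : ℂ) ^ h * (Real.exp (-(ε * |x|)) : ℂ) := by
  set f : ℝ → ℂ := fun t => ((|t| : ℝ) : ℂ) ^ h * (Real.exp (-(ε * |t|)) : ℂ) with hfdef
  have hfi : Integrable f := f_integrable hh hε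
  have h2πne : (2 * (Real.pi : ℂ)) ≠ 0 := by
    simp [Real.pi_ne_zero, Complex.ofReal_ne_zero]
  have h𝓕 : ∀ w : ℝ, FourierTransform.fourier f w
      = Complex.Gamma (h + 1) *
        (((ε : ℂ) + Complex.I * ((2 * π * w : ℝ) : ℂ)) ^ (-(h + 1)) +
          ((ε : ℂ) - Complex.I * ((2 * π * w : ℝ) : ℂ)) ^ (-(h + 1))) := by
    intro w
    rw [Real.fourier_real_eq_integral_exp_smul, ← fourier_calc hh hε (2 * π * w)]
    refine integral_congr_ae (Filter.Eventually.of_forall fun v => ?_)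
    dsimp only
    rw [smul_eq_mul, mul_comm]
    congr 1
    push_cast
    ring
  have hFint : Integrable (FourierTransform.fourier f) := by
    have hK1 : Integrable (fun y : ℝ => ((ε : ℂ) + Complex.I * y) ^ (-(h + 1))) :=
      ker_integrable hh hε (c := Complex.I) (by simp) (by simp)
    have hK2 : Integrable (fun y : ℝ => ((ε : ℂ) - Complex.I * y) ^ (-(h + 1))) := by
      have := ker_integrable hh hε (c := -Complex.I) (by simp) (by simp)
      refine this.congr (Filter.Eventually.of_forall fun y => ?_)
      congr 1
      ring
    have hsum := ((hK1.add hK2).const_mul (Complex.Gamma (h + 1)))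
    have h2πne' : (2 * π : ℝ) ≠ 0 := by simp [Real.pi_ne_zero]
    have := (integrable_comp_mul_left_iff
      (fun y : ℝ => Complex.Gamma (h + 1) *
        (((ε : ℂ) + Complex.I * y) ^ (-(h + 1)) + ((ε : ℂ) - Complex.I * y) ^ (-(h + 1))))
      h2πne').2 hsum
    refine this.congr (Filter.Eventually.of_forall fun w => ?_)
    rw [h𝓕 w]
  have hcont : ContinuousAt f x := by
    apply ContinuousAt.mul
    · exact (continuousAt_cpow_const (Or.inl (by simpa using abs_pos.2 hx))).comp
        (Complex.continuous_ofReal.continuousAt.comp _root_.continuous_abs.continuousAt)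
    · exact Complex.continuous_ofReal.continuousAt.comp
        ((Real.continuous_exp.comp ((continuous_const.mul _root_.continuous_abs).neg)).continuousAt)
  have hinv := hfi.fourierInv_fourier_eq hFint hcont
  rw [Real.fourierInv_eq_fourier_neg,
    Real.fourier_real_eq_integral_exp_smul] at hinv
  set g : ℝ → ℂ := fun u => K h ε u * Complex.exp (Complex.I * (u : ℂ) * (x : ℂ)) with hgdef
  have hstep : (∫ v : ℝ, Complex.exp (((-2 * π * v * (-x) : ℝ) : ℂ) * Complex.I)
      • FourierTransform.fourier f v) = ∫ u : ℝ, g u := by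
    have heq : ∀ v : ℝ, Complex.exp (((-2 * π * v * (-x) : ℝ) : ℂ) * Complex.I)
        • FourierTransform.fourier f v = (2 * (Real.pi : ℂ)) * g (2 * π * v) := by
      intro v
      rw [smul_eq_mul, h𝓕 v, hgdef]
      simp only [K]
      rw [show Complex.Gamma (1 + h) = Complex.Gamma (h + 1) by rw [add_comm]]
      field_simp
      push_cast
      ring_nf
    rw [integral_congr_ae (Filter.Eventually.of_forall heq), MeasureTheory.integral_const_mul,
      MeasureTheory.Measure.integral_comp_mul_left g (2 * π)]
    have habs : |(2 * π : ℝ)⁻¹| = (2 * π : ℝ)⁻¹ := abs_of_pos (by positivity)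
    rw [habs, Complex.real_smul]
    push_cast
    rw [← mul_assoc]
    rw [show (2 * (Real.pi : ℂ)) * (2 * (Real.pi : ℂ))⁻¹ = 1 from mul_inv_cancel₀ h2πne]
    rw [one_mul]
  rw [hstep] at hinv
  exact hinv
end

section
/- For every n ∈ ℕ, every ε > 0 and every t ∈ ℝ, one has K_n^ε(t) = ((−1)^n/π) · D^n_a (a/(a²+t²)) |_{a=ε}, i.e. (Γ(n+1)/(2π)) · ((ε+it)^{−(n+1)} + (ε−it)^{−(n+1)}) = ((−1)^n/π) · (iteratedDeriv n f) (ε), where f : ℝ → ℝ is the function f(a) = a/(a²+t²) (which is smooth on a neighbourhood of ε, since ε > 0). -/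
open MeasureTheory

lemma deriv_ofReal_comp' (f : ℝ → ℝ) (x : ℝ) :
    deriv (fun a => (f a : ℂ)) x = Complex.ofReal (deriv f x) := by
  by_cases h : DifferentiableAt ℝ f x
  · exact h.hasDerivAt.ofReal_comp.deriv
  · rw [deriv_zero_of_not_differentiableAt h,
      deriv_zero_of_not_differentiableAt, Complex.ofReal_zero]
    intro hc
    apply h
    have := (Complex.reCLM.differentiableAt (x := (f x : ℂ))).comp x hc
    simpa [Function.comp_def] using this

lemma iteratedDeriv_ofReal (n : ℕ) (f : ℝ → ℝ) :
    iteratedDeriv n (fun a => (f a : ℂ)) = fun x => Complex.ofReal (iteratedDeriv n f x) := by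
  induction n with
  | zero => simp [iteratedDeriv_zero]
  | succ n ih =>
    funext x
    rw [iteratedDeriv_succ, iteratedDeriv_succ, ih, deriv_ofReal_comp']

lemma hasDerivAt_zpow_ofReal (c : ℂ) (m : ℤ) (x : ℝ) (hx : (x : ℂ) + c ≠ 0) :
    HasDerivAt (fun a : ℝ => ((a : ℂ) + c) ^ m) ((m : ℂ) * ((x : ℂ) + c) ^ (m - 1)) x := by
  have h1 : HasDerivAt (fun z : ℂ => (z + c) ^ m)
      ((m : ℂ) * ((x : ℂ) + c) ^ (m - 1) * 1) (x : ℂ) := by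
    have := (hasDerivAt_zpow m ((x : ℂ) + c) (Or.inl hx)).comp ((x : ℝ) : ℂ)
      ((hasDerivAt_id ((x : ℝ) : ℂ)).add_const c)
    exact this
  simpa using h1.comp_ofReal

lemma iter_comb (c₁ c₂ : ℂ) (n : ℕ) : ∀ x : ℝ, (x : ℂ) + c₁ ≠ 0 → (x : ℂ) + c₂ ≠ 0 →
    iteratedDeriv n (fun a : ℝ => (((a : ℂ) + c₁)⁻¹ + ((a : ℂ) + c₂)⁻¹) / 2) x
      = (-1) ^ n * (n.factorial : ℂ) / 2 *
        (((x : ℂ) + c₁) ^ (-(n + 1) : ℤ) + ((x : ℂ) + c₂) ^ (-(n + 1) : ℤ)) := by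
  induction n with
  | zero => intro x h1 h2; simp [zpow_neg_one]; ring
  | succ n ih =>
    intro x h1 h2
    have hopen : IsOpen {a : ℝ | (a : ℂ) + c₁ ≠ 0 ∧ (a : ℂ) + c₂ ≠ 0} := by
      have hc : ∀ c : ℂ, IsOpen {a : ℝ | (a : ℂ) + c ≠ 0} := fun c =>
        isOpen_ne.preimage (by continuity)
      exact (hc c₁).inter (hc c₂)
    have hev : iteratedDeriv n (fun a : ℝ => (((a : ℂ) + c₁)⁻¹ + ((a : ℂ) + c₂)⁻¹) / 2)
        =ᶠ[nhds x] fun a : ℝ => (-1) ^ n * (n.factorial : ℂ) / 2 *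
          (((a : ℂ) + c₁) ^ (-(n + 1) : ℤ) + ((a : ℂ) + c₂) ^ (-(n + 1) : ℤ)) := by
      filter_upwards [hopen.mem_nhds ⟨h1, h2⟩] with a ha using ih a ha.1 ha.2
    rw [iteratedDeriv_succ, hev.deriv_eq]
    have hd : HasDerivAt (fun a : ℝ =>
        ((a : ℂ) + c₁) ^ (-(n + 1) : ℤ) + ((a : ℂ) + c₂) ^ (-(n + 1) : ℤ))
        (((-(n + 1) : ℤ) : ℂ) * ((x : ℂ) + c₁) ^ ((-(n + 1) : ℤ) - 1)
          + ((-(n + 1) : ℤ) : ℂ) * ((x : ℂ) + c₂) ^ ((-(n + 1) : ℤ) - 1)) x :=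
      (hasDerivAt_zpow_ofReal c₁ _ x h1).add (hasDerivAt_zpow_ofReal c₂ _ x h2)
    rw [deriv_const_mul _ hd.differentiableAt, hd.deriv]
    have hnn : ((-(n + 1) : ℤ) - 1) = (-(n + 1 + 1) : ℤ) := by ring
    rw [hnn]
    push_cast [Nat.factorial_succ]
    ring

/-- For every `n ∈ ℕ`, `ε > 0` and `t ∈ ℝ`,
`K_n^ε(t) = ((-1)^n/π) · Dₐⁿ (a/(a²+t²)) |_{a=ε}`. -/
theorem stmt_3 (n : ℕ) (ε : ℝ) (hε : 0 < ε) (t : ℝ) :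
    K (n : ℂ) ε t =
      ((((-1 : ℝ) ^ n / Real.pi) *
        iteratedDeriv n (fun a : ℝ => a / (a ^ 2 + t ^ 2)) ε : ℝ) : ℂ) := by
  have h1 : ((ε : ℂ) + Complex.I * t) ≠ 0 := by
    intro h
    have := congrArg Complex.re h
    simp at this
    exact hε.ne' this
  have h2 : ((ε : ℂ) + (-(Complex.I * t))) ≠ 0 := by
    intro h
    have := congrArg Complex.re h
    simp at this
    exact hε.ne' this
  -- complexified derivative
  have key : Complex.ofReal (iteratedDeriv n (fun a : ℝ => a / (a ^ 2 + t ^ 2)) ε)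
      = (-1) ^ n * (n.factorial : ℂ) / 2 *
        (((ε : ℂ) + Complex.I * t) ^ (-(n + 1) : ℤ)
          + ((ε : ℂ) - Complex.I * t) ^ (-(n + 1) : ℤ)) := by
    have := congrFun (iteratedDeriv_ofReal n (fun a : ℝ => a / (a ^ 2 + t ^ 2))) ε
    rw [← this]
    have hev : (fun a : ℝ => ((a / (a ^ 2 + t ^ 2) : ℝ) : ℂ)) =ᶠ[nhds ε]
        fun a : ℝ => (((a : ℂ) + Complex.I * t)⁻¹ + ((a : ℂ) + (-(Complex.I * t)))⁻¹) / 2 := by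
      filter_upwards [isOpen_Ioi.mem_nhds hε] with a (ha : 0 < a)
      have ha1 : ((a : ℂ) + Complex.I * t) ≠ 0 := by
        intro h
        have := congrArg Complex.re h
        simp at this
        exact ha.ne' this
      have ha2 : ((a : ℂ) + (-(Complex.I * t))) ≠ 0 := by
        intro h
        have := congrArg Complex.re h
        simp at this
        exact ha.ne' this
      have hd : ((a : ℝ) ^ 2 + t ^ 2 : ℝ) ≠ 0 := by positivity
      have hdc : ((a : ℂ) ^ 2 + (t : ℂ) ^ 2 : ℂ) ≠ 0 := by
        exact_mod_cast Complex.ofReal_ne_zero.mpr hd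
      push_cast
      have ha2' : ((a : ℂ) - Complex.I * t) ≠ 0 := by rwa [sub_eq_add_neg]
      rw [← sub_eq_add_neg]
      have ha3 : ((a : ℂ) + t * Complex.I) ≠ 0 := by rwa [mul_comm]
      have ha4 : ((a : ℂ) - t * Complex.I) ≠ 0 := by rwa [mul_comm]
      field_simp
      ring_nf
      rw [Complex.I_sq]
      ring
    rw [hev.iteratedDeriv_eq n, iter_comb (Complex.I * t) (-(Complex.I * t)) n ε h1 h2]
    ring_nf
  -- now the kernel side
  rw [K]
  have hg : Complex.Gamma (1 + (n : ℂ)) = (n.factorial : ℂ) := by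
    rw [add_comm]
    exact_mod_cast Complex.Gamma_nat_eq_factorial n
  have hc1 : ((ε : ℂ) + Complex.I * t) ^ (-((n : ℂ) + 1))
      = ((ε : ℂ) + Complex.I * t) ^ (-(n + 1) : ℤ) := by
    rw [show (-((n : ℂ) + 1)) = ((-(n + 1) : ℤ) : ℂ) by push_cast; ring,
      Complex.cpow_intCast]
  have hc2 : ((ε : ℂ) - Complex.I * t) ^ (-((n : ℂ) + 1))
      = ((ε : ℂ) - Complex.I * t) ^ (-(n + 1) : ℤ) := by
    rw [show (-((n : ℂ) + 1)) = ((-(n + 1) : ℤ) : ℂ) by push_cast; ring,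
      Complex.cpow_intCast]
  rw [hg, hc1, hc2]
  push_cast
  rw [key]
  have hpi : (Real.pi : ℂ) ≠ 0 := by
    exact_mod_cast Real.pi_ne_zero
  field_simp
  ring_nf
  rw [show ((-1 : ℂ)) ^ (n * 2) = 1 from by rw [mul_comm, pow_mul, neg_one_sq, one_pow]]
  ring
end

section
/- Let N ≥ 1 be an integer, s ∈ ℂ with Re(s) > −1/2, and ξ ∈ ℝ with ξ ≠ 0. Set δ = sgn(ξ) ∈ {±1} and define φ : ℝ → ℂ by φ(η) = ∫_ℝ e^{−iη(x−iδ)} · (1+x²)^{−(s+N)} dx. Then J_N(ξ,s) = (−1)^{N(N−1)/2} · N! · e^{N|ξ|} · det( M ), where M is the N×N complex matrix with entries M_{j,k} = (iteratedDeriv (j+k) φ)(ξ) for j, k ∈ {0, 1, …, N−1}. -/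
open MeasureTheory

namespace Stmt5Aux
open Complex Finset


noncomputable def w (s : ℂ) (N : ℕ) (x : ℝ) : ℂ := ((1 + x ^ 2 : ℝ) : ℂ) ^ (-(s + (N : ℂ)))

lemma w_cont (s : ℂ) (N : ℕ) : Continuous (w s N) := by
  apply Continuous.cpow
  · exact Complex.continuous_ofReal.comp (by continuity)
  · exact continuous_const
  · intro x
    refine Or.inl ?_; rw [Complex.ofReal_re]; positivity

lemma norm_w (s : ℂ) (N : ℕ) (x : ℝ) :
    ‖w s N x‖ = (1 + x ^ 2 : ℝ) ^ (-(s.re + N)) := by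
  have h : (0:ℝ) < 1 + x ^ 2 := by positivity
  rw [w, Complex.norm_cpow_eq_rpow_re_of_pos h]
  norm_num

lemma integrable_rpow {p : ℝ} (hp : 1 / 2 < p) :
    Integrable fun x : ℝ => (1 + x ^ 2) ^ (-p) := by
  have h2p : (Module.finrank ℝ ℝ : ℝ) < 2 * p := by
    simp only [Module.finrank_self, Nat.cast_one]; linarith
  refine ((integrable_one_add_norm (E := ℝ) h2p).const_mul ((2:ℝ) ^ p)).mono'
    ?_ ?_
  · exact ((show Continuous fun x : ℝ => 1 + x ^ 2 from continuous_const.add (continuous_pow 2)).rpow_const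
      (fun x => Or.inl (by positivity))).aestronglyMeasurable
  · refine Filter.Eventually.of_forall fun x => ?_
    have h1 : (0:ℝ) < 1 + x ^ 2 := by positivity
    have h3 : (0:ℝ) < 1 + ‖x‖ := by positivity
    rw [Real.norm_eq_abs, abs_of_pos (Real.rpow_pos_of_pos h1 _)]
    have hb : (1 + ‖x‖) ^ (2:ℕ) ≤ 2 * (1 + x ^ 2) := by
      rw [Real.norm_eq_abs]
      nlinarith [_root_.sq_abs x, abs_nonneg x, sq_nonneg (1 - |x|)]
    have key : (2 * (1 + x ^ 2)) ^ (-p) ≤ ((1 + ‖x‖) ^ (2:ℕ)) ^ (-p) :=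
      Real.rpow_le_rpow_of_nonpos (by positivity) hb (by linarith)
    have e1 : ((1 + ‖x‖) ^ (2:ℕ)) ^ (-p) = (1 + ‖x‖) ^ (-(2*p)) := by
      rw [← Real.rpow_natCast (1 + ‖x‖) 2, ← Real.rpow_mul h3.le]
      norm_num
    have e2 : (2 * (1 + x ^ 2)) ^ (-p) = 2 ^ (-p) * (1 + x ^ 2) ^ (-p) :=
      Real.mul_rpow (by norm_num) h1.le
    have e3 : (2:ℝ) ^ p * (2:ℝ) ^ (-p) = 1 := by
      rw [← Real.rpow_add (by norm_num)]; simp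
    calc (1 + x ^ 2) ^ (-p) = 2 ^ p * ((2 * (1 + x ^ 2)) ^ (-p)) := by
          rw [e2, ← mul_assoc, e3, one_mul]
      _ ≤ 2 ^ p * ((1 + ‖x‖) ^ (-(2*p))) := by
          rw [← e1]
          exact mul_le_mul_of_nonneg_left key (by positivity)

noncomputable def dd (δ : ℝ) (x : ℝ) : ℂ := Complex.I * x - δ
noncomputable def v (s : ℂ) (N : ℕ) (ξ : ℝ) (x : ℝ) : ℂ :=
  Complex.exp (Complex.I * ξ * x) * w s N x
noncomputable def K (s : ℂ) (N : ℕ) (δ : ℝ) (m : ℕ) (η x : ℝ) : ℂ :=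
  (-(Complex.I * ((x : ℂ) - Complex.I * δ))) ^ m *
    (Complex.exp (-(Complex.I * η * ((x : ℂ) - Complex.I * δ))) * w s N x)

lemma norm_sub_I (δ x : ℝ) (hδ : δ ^ 2 = 1) :
    ‖(x : ℂ) - Complex.I * δ‖ = Real.sqrt (1 + x ^ 2) := by
  rw [Complex.norm_def, Complex.normSq_apply]
  simp only [Complex.sub_re, Complex.sub_im, Complex.ofReal_re, Complex.ofReal_im,
    Complex.mul_re, Complex.mul_im, Complex.I_re, Complex.I_im]
  rw [show (x - (0 * δ - 1 * 0)) * (x - (0 * δ - 1 * 0)) + (0 - (0 * 0 + 1 * δ)) * (0 - (0 * 0 + 1 * δ)) = 1 + x ^ 2 by nlinarith [hδ]]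

lemma norm_dd (δ x : ℝ) (hδ : δ ^ 2 = 1) :
    ‖dd δ x‖ = Real.sqrt (1 + x ^ 2) := by
  rw [dd, Complex.norm_def, Complex.normSq_apply]
  simp only [Complex.sub_re, Complex.sub_im, Complex.ofReal_re, Complex.ofReal_im,
    Complex.mul_re, Complex.mul_im, Complex.I_re, Complex.I_im]
  rw [show (0 * x - 1 * 0 - δ) * (0 * x - 1 * 0 - δ) + (0 * 0 + 1 * x - 0) * (0 * 0 + 1 * x - 0) = 1 + x ^ 2 by nlinarith [hδ]]

lemma sqrt_pow_mul (x : ℝ) (m : ℕ) (r : ℝ) :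
    Real.sqrt (1 + x ^ 2) ^ m * (1 + x ^ 2) ^ r = (1 + x ^ 2) ^ ((m : ℝ) / 2 + r) := by
  have h1 : (0:ℝ) < 1 + x ^ 2 := by positivity
  rw [Real.sqrt_eq_rpow, ← Real.rpow_natCast ((1 + x^2) ^ ((1:ℝ)/2)) m,
    ← Real.rpow_mul h1.le, ← Real.rpow_add h1]
  ring_nf

lemma norm_dv (s : ℂ) (N : ℕ) (δ ξ : ℝ) (hδ : δ ^ 2 = 1) (m : ℕ) (x : ℝ) :
    ‖dd δ x ^ m * v s N ξ x‖ = (1 + x ^ 2) ^ ((m : ℝ) / 2 - (s.re + N)) := by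
  rw [norm_mul, norm_pow, norm_dd δ x hδ, v, norm_mul, norm_w]
  have : ‖Complex.exp (Complex.I * ξ * x)‖ = 1 := by
    rw [Complex.norm_exp]
    simp [Complex.mul_re]
  rw [this, one_mul, sqrt_pow_mul]
  ring_nf

lemma norm_K (s : ℂ) (N : ℕ) (δ : ℝ) (hδ : δ ^ 2 = 1) (m : ℕ) (η x : ℝ) :
    ‖K s N δ m η x‖ =
      Real.exp (-(η * δ)) * (1 + x ^ 2) ^ ((m : ℝ) / 2 - (s.re + N)) := by
  rw [K, norm_mul, norm_mul, norm_pow, norm_neg, norm_mul, Complex.norm_I, one_mul,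
    norm_sub_I δ x hδ, norm_w]
  have : ‖Complex.exp (-(Complex.I * η * ((x:ℂ) - Complex.I * δ)))‖ = Real.exp (-(η * δ)) := by
    rw [Complex.norm_exp]
    congr 1
    simp [Complex.mul_re, Complex.mul_im]
  rw [this, show Real.sqrt (1+x^2) ^ m * (Real.exp (-(η*δ)) * (1+x^2) ^ (-(s.re+(N:ℝ)))) =
    Real.exp (-(η*δ)) * (Real.sqrt (1+x^2) ^ m * (1+x^2) ^ (-(s.re+(N:ℝ)))) from by ring,
    sqrt_pow_mul]
  ring_nf

lemma exp_bound_int (s : ℂ) (N : ℕ) (hs : -(1/2 : ℝ) < s.re) (hN : 1 ≤ N)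
    {m : ℕ} (hm : (m : ℝ) ≤ 2 * N - 2) :
    Integrable fun x : ℝ => (1 + x ^ 2) ^ ((m : ℝ) / 2 - (s.re + N)) := by
  have : ((m:ℝ)/2 - (s.re + N)) = -(s.re + N - m/2) := by ring
  rw [this]
  apply integrable_rpow
  have hN1 : (1:ℝ) ≤ N := by exact_mod_cast hN
  linarith

lemma cont_dv (s : ℂ) (N : ℕ) (δ ξ : ℝ) (m : ℕ) :
    Continuous fun x : ℝ => dd δ x ^ m * v s N ξ x := by
  have hw := w_cont s N
  unfold dd v
  apply Continuous.mul
  · fun_prop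
  · exact (Complex.continuous_exp.comp (by fun_prop)).mul hw

lemma cont_K (s : ℂ) (N : ℕ) (δ : ℝ) (m : ℕ) (η : ℝ) :
    Continuous (K s N δ m η) := by
  have hw := w_cont s N
  unfold K
  apply Continuous.mul
  · fun_prop
  · exact (Complex.continuous_exp.comp (by fun_prop)).mul hw

lemma integrable_dv (s : ℂ) (N : ℕ) (hs : -(1/2 : ℝ) < s.re) (hN : 1 ≤ N)
    (δ ξ : ℝ) (hδ : δ ^ 2 = 1) {m : ℕ} (hm : (m : ℝ) ≤ 2 * N - 2) :
    Integrable fun x : ℝ => dd δ x ^ m * v s N ξ x := by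
  refine (exp_bound_int s N hs hN hm).mono' (cont_dv s N δ ξ m).aestronglyMeasurable ?_
  exact Filter.Eventually.of_forall fun x => le_of_eq (norm_dv s N δ ξ hδ m x)

lemma integrable_K (s : ℂ) (N : ℕ) (hs : -(1/2 : ℝ) < s.re) (hN : 1 ≤ N)
    (δ : ℝ) (hδ : δ ^ 2 = 1) {m : ℕ} (hm : (m : ℝ) ≤ 2 * N - 2) (η : ℝ) :
    Integrable (K s N δ m η) := by
  refine (Integrable.const_mul (exp_bound_int s N hs hN hm) (Real.exp (-(η * δ)))).mono'
    (cont_K s N δ m η).aestronglyMeasurable ?_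
  exact Filter.Eventually.of_forall fun x => le_of_eq (norm_K s N δ hδ m η x)

lemma abs_of_sq (δ : ℝ) (hδ : δ ^ 2 = 1) : |δ| = 1 := by
  have := abs_eq_abs (a := δ) (b := 1)
  have h : (δ - 1) * (δ + 1) = 0 := by nlinarith
  rcases mul_eq_zero.1 h with h' | h'
  · simp [show δ = 1 by linarith]
  · simp [show δ = -1 by linarith]

lemma iteratedDeriv_phi (s : ℂ) (N : ℕ) (hs : -(1/2 : ℝ) < s.re) (hN : 1 ≤ N)
    (δ : ℝ) (hδ : δ ^ 2 = 1) :
    ∀ m : ℕ, (m : ℝ) ≤ 2 * N - 2 → ∀ η : ℝ,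
      iteratedDeriv m (fun η : ℝ => ∫ x : ℝ,
        Complex.exp (-(Complex.I * η * ((x : ℂ) - Complex.I * δ))) * w s N x) η =
      ∫ x : ℝ, K s N δ m η x := by
  intro m
  induction m with
  | zero =>
      intro _ η
      simp only [iteratedDeriv_zero, K, pow_zero, one_mul]
  | succ m IH =>
      intro hm η
      have hm' : (m : ℝ) ≤ 2 * N - 2 := by push_cast at hm ⊢; linarith
      rw [iteratedDeriv_succ, funext (IH hm')]
      have key := hasDerivAt_integral_of_dominated_loc_of_deriv_le
        (F := fun η x => K s N δ m η x) (F' := fun η x => K s N δ (m+1) η x)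
        (x₀ := η) (s := Metric.ball η 1) (μ := volume)
        (bound := fun x : ℝ => Real.exp (|η|+1) * (1+x^2) ^ (((m:ℝ)+1)/2 - (s.re+N)))
        (Metric.ball_mem_nhds η one_pos)
        (Filter.Eventually.of_forall fun η' => (cont_K s N δ m η').aestronglyMeasurable)
        (integrable_K s N hs hN δ hδ hm' η)
        ((cont_K s N δ (m+1) η).aestronglyMeasurable)
        ?_ ?_ ?_
      · rw [key.2.deriv]
      · refine Filter.Eventually.of_forall fun x => fun η' hη' => ?_
        rw [norm_K s N δ hδ (m+1) η' x]
        have h1 : -(η' * δ) ≤ |η| + 1 := by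
          have : |η' - η| < 1 := by
            simpa [Real.dist_eq] using Metric.mem_ball.1 hη'
          calc -(η' * δ) ≤ |η' * δ| := neg_le_abs _
            _ = |η'| * |δ| := abs_mul _ _
            _ = |η'| := by rw [abs_of_sq δ hδ, mul_one]
            _ ≤ |η| + 1 := by
                have := abs_sub_abs_le_abs_sub η' η
                linarith
        have h2 : ((m+1 : ℕ) : ℝ) = (m:ℝ) + 1 := by push_cast; ring
        rw [h2]
        exact mul_le_mul_of_nonneg_right (Real.exp_le_exp.2 h1)
          (Real.rpow_nonneg (by positivity) _)
      · have h := (exp_bound_int s N hs hN (m := m+1)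
            (by push_cast at hm ⊢; linarith)).const_mul (Real.exp (|η|+1))
        convert h using 3
        push_cast; ring
      · refine Filter.Eventually.of_forall fun x => fun η' _ => ?_
        set c : ℂ := -(Complex.I * ((x:ℂ) - Complex.I * δ)) with hc
        have harg : ∀ t : ℝ, -(Complex.I * (t:ℂ) * ((x:ℂ) - Complex.I*δ)) = c * t := fun t => by
          rw [hc]; ring
        have h0 : HasDerivAt (fun z : ℂ => Complex.exp (c * z))
            (Complex.exp (c * η') * (c * 1)) (η' : ℂ) :=
          ((hasDerivAt_id (η':ℂ)).const_mul c).cexp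
        have h1 := (h0.comp_ofReal.mul_const (w s N x)).const_mul (c ^ m)
        simp only [K, harg]
        convert h1 using 1
        case e'_9 => rw [← hc]; ring
        case e'_4 => rfl

lemma sum_card_Ioi (N : ℕ) : ∑ j : Fin N, (Finset.Ioi j).card = N * (N - 1) / 2 := by
  have h : ∀ j : Fin N, (Finset.Ioi j).card = N - 1 - j.1 := fun j => Fin.card_Ioi j
  simp_rw [h]
  rw [Fin.sum_univ_eq_sum_range (fun i => N - 1 - i) N]
  rw [show ∑ i ∈ range N, (N - 1 - i) = ∑ i ∈ range N, i from Finset.sum_range_reflect (fun i => i) N]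
  exact Finset.sum_range_id N

lemma perm_sum (N : ℕ) (a : ℕ → ℂ) :
    ∑ p : Equiv.Perm (Fin N) × Equiv.Perm (Fin N),
      ((Equiv.Perm.sign p.1 : ℤ) : ℂ) * ((Equiv.Perm.sign p.2 : ℤ) : ℂ) *
        ∏ k, a ((p.1 k).1 + (p.2 k).1)
    = (N.factorial : ℂ) * ∑ σ : Equiv.Perm (Fin N),
        ((Equiv.Perm.sign σ : ℤ) : ℂ) * ∏ k, a ((σ k).1 + k.1) := by
  rw [Fintype.sum_prod_type_right]
  have inner : ∀ τ : Equiv.Perm (Fin N),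
      (∑ σ : Equiv.Perm (Fin N), ((Equiv.Perm.sign σ : ℤ) : ℂ) * ((Equiv.Perm.sign τ : ℤ) : ℂ) *
        ∏ k, a ((σ k).1 + (τ k).1))
      = ∑ ρ : Equiv.Perm (Fin N), ((Equiv.Perm.sign ρ : ℤ) : ℂ) * ∏ k, a ((ρ k).1 + k.1) := by
    intro τ
    rw [← Equiv.sum_comp (Equiv.mulRight τ) (fun σ => ((Equiv.Perm.sign σ : ℤ) : ℂ) *
      ((Equiv.Perm.sign τ : ℤ) : ℂ) * ∏ k, a ((σ k).1 + (τ k).1))]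
    apply Finset.sum_congr rfl
    intro ρ _
    simp only [Equiv.coe_mulRight, Equiv.Perm.mul_apply]
    have h2 : ((Equiv.Perm.sign τ : ℤ) : ℂ) * ((Equiv.Perm.sign τ : ℤ) : ℂ) = 1 := by
      norm_cast
      rw [Int.units_mul_self]; simp
    have hsign : ((Equiv.Perm.sign (ρ * τ) : ℤ) : ℂ) * ((Equiv.Perm.sign τ : ℤ) : ℂ)
        = ((Equiv.Perm.sign ρ : ℤ) : ℂ) := by
      rw [Equiv.Perm.sign_mul]
      push_cast
      rw [mul_assoc, h2, mul_one]
    rw [hsign, Equiv.prod_comp τ (fun k => a ((ρ k).1 + k.1))]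
  rw [Finset.sum_congr rfl (fun τ _ => inner τ), Finset.sum_const]
  simp [Fintype.card_perm, mul_comm]

lemma vandermonde_sum (N : ℕ) (δ : ℝ) (x : Fin N → ℝ) :
    ∑ σ : Equiv.Perm (Fin N), ((Equiv.Perm.sign σ : ℤ) : ℂ) * ∏ k, dd δ (x k) ^ (σ k).1
    = ∏ j : Fin N, ∏ k ∈ Finset.Ioi j, (dd δ (x k) - dd δ (x j)) := by
  rw [← Matrix.det_vandermonde (fun k => dd δ (x k)), ← Matrix.det_transpose,
    Matrix.det_apply']
  apply Finset.sum_congr rfl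
  intro σ _
  congr 1

lemma pointwise_sum (s : ℂ) (N : ℕ) (δ ξ : ℝ) (x : Fin N → ℝ) :
    ∑ p : Equiv.Perm (Fin N) × Equiv.Perm (Fin N),
      ((Equiv.Perm.sign p.1 : ℤ) : ℂ) * ((Equiv.Perm.sign p.2 : ℤ) : ℂ) *
        ∏ k, (dd δ (x k) ^ ((p.1 k).1 + (p.2 k).1) * v s N ξ (x k))
    = (-1 : ℂ) ^ (N * (N - 1) / 2) *
        ((∏ j, v s N ξ (x j)) * ∏ j : Fin N, ∏ k ∈ Finset.Ioi j, ((x k - x j : ℝ) : ℂ) ^ 2) := by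
  have hterm : ∀ σ τ : Equiv.Perm (Fin N),
      (∏ k, (dd δ (x k) ^ ((σ k).1 + (τ k).1) * v s N ξ (x k)))
      = (∏ k, dd δ (x k) ^ (σ k).1) * ((∏ k, dd δ (x k) ^ (τ k).1) * ∏ k, v s N ξ (x k)) := by
    intro σ τ
    rw [← Finset.prod_mul_distrib, ← Finset.prod_mul_distrib]
    apply Finset.prod_congr rfl
    intro k _
    rw [pow_add]; ring
  have h1 : ∀ σ τ : Equiv.Perm (Fin N),
      ((Equiv.Perm.sign σ : ℤ) : ℂ) * ((Equiv.Perm.sign τ : ℤ) : ℂ) *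
        ∏ k, (dd δ (x k) ^ ((σ k).1 + (τ k).1) * v s N ξ (x k))
      = (((Equiv.Perm.sign σ : ℤ) : ℂ) * ∏ k, dd δ (x k) ^ (σ k).1) *
          (((((Equiv.Perm.sign τ : ℤ) : ℂ) * ∏ k, dd δ (x k) ^ (τ k).1)) * ∏ k, v s N ξ (x k)) := by
    intro σ τ
    rw [hterm σ τ]; ring
  rw [Fintype.sum_prod_type]
  simp_rw [h1, ← Finset.mul_sum]
  rw [← Finset.sum_mul, ← Finset.sum_mul, vandermonde_sum N δ x, ← mul_assoc]
  have hsq : ∀ j k : Fin N, (dd δ (x k) - dd δ (x j)) * (dd δ (x k) - dd δ (x j))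
      = (-1 : ℂ) * ((x k - x j : ℝ) : ℂ) ^ 2 := by
    intro j k
    have e : dd δ (x k) - dd δ (x j) = Complex.I * ((x k : ℂ) - (x j : ℂ)) := by
      rw [dd, dd]; ring
    rw [e, mul_mul_mul_comm, Complex.I_mul_I]
    push_cast; ring
  have hGG : (∏ j : Fin N, ∏ k ∈ Finset.Ioi j, (dd δ (x k) - dd δ (x j))) *
      (∏ j : Fin N, ∏ k ∈ Finset.Ioi j, (dd δ (x k) - dd δ (x j)))
      = ∏ j : Fin N, ∏ k ∈ Finset.Ioi j, ((-1 : ℂ) * ((x k - x j : ℝ) : ℂ) ^ 2) := by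
    rw [← Finset.prod_mul_distrib]
    apply Finset.prod_congr rfl
    intro j _
    rw [← Finset.prod_mul_distrib]
    exact Finset.prod_congr rfl fun k _ => hsq j k
  rw [hGG]
  simp only [Finset.prod_mul_distrib, Finset.prod_const]
  rw [Finset.prod_pow_eq_pow_sum, sum_card_Ioi]
  ring

lemma K_neg (s : ℂ) (N : ℕ) (δ ξ : ℝ) (hδξ : ξ * δ = |ξ|) (m : ℕ) (x : ℝ) :
    K s N δ m ξ (-x) = (Real.exp (-|ξ|) : ℂ) * (dd δ x ^ m * v s N ξ x) := by
  have hc : ((|ξ| : ℝ) : ℂ) = (ξ : ℂ) * (δ : ℂ) := by rw [← hδξ]; push_cast; ring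
  have hbase : -(Complex.I * (((-x : ℝ) : ℂ) - Complex.I * δ)) = dd δ x := by
    rw [dd]; push_cast
    linear_combination (δ : ℂ) * Complex.I_sq
  have harg : -(Complex.I * (ξ : ℂ) * (((-x : ℝ) : ℂ) - Complex.I * δ))
      = Complex.I * (ξ : ℂ) * (x : ℂ) + ((-|ξ| : ℝ) : ℂ) := by
    push_cast
    rw [show ((|ξ| : ℝ) : ℂ) = (ξ : ℂ) * (δ : ℂ) from hc]
    linear_combination (ξ : ℂ) * (δ : ℂ) * Complex.I_sq
  have hw : w s N (-x) = w s N x := by rw [w, w, neg_sq]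
  rw [K, hbase, harg, Complex.exp_add, hw, v]
  rw [show ((-|ξ| : ℝ) : ℂ) = ((-|ξ| : ℝ) : ℂ) from rfl, ← Complex.ofReal_exp]
  ring

lemma integral_K_eq (s : ℂ) (N : ℕ) (δ ξ : ℝ) (hδξ : ξ * δ = |ξ|) (m : ℕ) :
    ∫ x : ℝ, K s N δ m ξ x
      = (Real.exp (-|ξ|) : ℂ) * ∫ x : ℝ, dd δ x ^ m * v s N ξ x := by
  rw [← integral_neg_eq_self (K s N δ m ξ) volume]
  simp_rw [K_neg s N δ ξ hδξ m]
  rw [integral_const_mul]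

end Stmt5Aux

open Stmt5Aux

/-- For an integer `N ≥ 1`, `s ∈ ℂ` with `Re s > -1/2` and `ξ ∈ ℝ`,
`J_N(ξ,s) = ∫_{ℝ^N} (∏ⱼ e^{iξxⱼ} (1+xⱼ²)^{-(s+N)}) ∏_{j<k} (x_k - x_j)² dx`. -/
noncomputable def JN (N : ℕ) (s : ℂ) (ξ : ℝ) : ℂ :=
  ∫ x : Fin N → ℝ,
    (∏ j, Complex.exp (Complex.I * (ξ : ℂ) * (x j : ℂ)) *
      ((1 + (x j) ^ 2 : ℝ) : ℂ) ^ (-(s + (N : ℂ)))) *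
    ∏ j : Fin N, ∏ k ∈ Finset.Ioi j, ((x k - x j : ℝ) : ℂ) ^ 2

/-- For `N ≥ 1`, `Re s > -1/2` and `ξ ≠ 0`, with `δ = sgn ξ` and
`φ(η) = ∫_ℝ e^{-iη(x-iδ)} (1+x²)^{-(s+N)} dx`, one has
`J_N(ξ,s) = (-1)^{N(N-1)/2} N! e^{N|ξ|} det (φ^{(j+k)}(ξ))_{j,k=0}^{N-1}`. -/
theorem stmt_5 (N : ℕ) (hN : 1 ≤ N) (s : ℂ) (hs : -(1 / 2 : ℝ) < s.re)
    (ξ : ℝ) (hξ : ξ ≠ 0) :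
    JN N s ξ =
      (-1 : ℂ) ^ (N * (N - 1) / 2) * (N.factorial : ℂ) * (Real.exp (N * |ξ|) : ℂ) *
        Matrix.det (Matrix.of fun j k : Fin N =>
          iteratedDeriv (j.1 + k.1)
            (fun η : ℝ => ∫ x : ℝ,
              Complex.exp (-(Complex.I * (η : ℂ) *
                ((x : ℂ) - Complex.I * (Real.sign ξ : ℂ)))) *
                ((1 + x ^ 2 : ℝ) : ℂ) ^ (-(s + (N : ℂ)))) ξ) := by
  set δ : ℝ := Real.sign ξ with hδdef
  have hδ2 : δ ^ 2 = 1 := by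
    rcases lt_or_gt_of_ne hξ with h | h
    · rw [hδdef, Real.sign_of_neg h]; norm_num
    · rw [hδdef, Real.sign_of_pos h]; norm_num
  have hδξ : ξ * δ = |ξ| := by
    rcases lt_or_gt_of_ne hξ with h | h
    · rw [hδdef, Real.sign_of_neg h, abs_of_neg h]; ring
    · rw [hδdef, Real.sign_of_pos h, abs_of_pos h]; ring
  -- the bound on indices
  have hidx : ∀ j k : Fin N, ((j.1 + k.1 : ℕ) : ℝ) ≤ 2 * N - 2 := by
    intro j k
    have h1 : j.1 + 1 ≤ N := j.isLt
    have h2 : k.1 + 1 ≤ N := k.isLt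
    have h1' : (j.1 : ℝ) + 1 ≤ N := by exact_mod_cast h1
    have h2' : (k.1 : ℝ) + 1 ≤ N := by exact_mod_cast h2
    push_cast
    linarith
  -- entry identification
  set a : ℕ → ℂ := fun m => ∫ x : ℝ, dd δ x ^ m * v s N ξ x with ha
  have hentry : ∀ j k : Fin N,
      iteratedDeriv (j.1 + k.1)
        (fun η : ℝ => ∫ x : ℝ,
          Complex.exp (-(Complex.I * (η : ℂ) * ((x : ℂ) - Complex.I * (δ : ℂ)))) *
            ((1 + x ^ 2 : ℝ) : ℂ) ^ (-(s + (N : ℂ)))) ξ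
      = (Real.exp (-|ξ|) : ℂ) * a (j.1 + k.1) := by
    intro j k
    have := iteratedDeriv_phi s N hs hN δ hδ2 (j.1 + k.1) (hidx j k) ξ
    rw [show (fun η : ℝ => ∫ x : ℝ,
          Complex.exp (-(Complex.I * (η : ℂ) * ((x : ℂ) - Complex.I * (δ : ℂ)))) *
            ((1 + x ^ 2 : ℝ) : ℂ) ^ (-(s + (N : ℂ))))
        = (fun η : ℝ => ∫ x : ℝ,
          Complex.exp (-(Complex.I * (η : ℂ) * ((x : ℂ) - Complex.I * (δ : ℂ)))) * w s N x)
      from rfl, this, integral_K_eq s N δ ξ hδξ]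
  -- determinant factorization
  have hdet : Matrix.det (Matrix.of fun j k : Fin N =>
      iteratedDeriv (j.1 + k.1)
        (fun η : ℝ => ∫ x : ℝ,
          Complex.exp (-(Complex.I * (η : ℂ) * ((x : ℂ) - Complex.I * (δ : ℂ)))) *
            ((1 + x ^ 2 : ℝ) : ℂ) ^ (-(s + (N : ℂ)))) ξ)
      = (Real.exp (-|ξ|) : ℂ) ^ N *
        Matrix.det (Matrix.of fun j k : Fin N => a (j.1 + k.1)) := by
    rw [show (Matrix.of fun j k : Fin N =>
        iteratedDeriv (j.1 + k.1)
          (fun η : ℝ => ∫ x : ℝ,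
            Complex.exp (-(Complex.I * (η : ℂ) * ((x : ℂ) - Complex.I * (δ : ℂ)))) *
              ((1 + x ^ 2 : ℝ) : ℂ) ^ (-(s + (N : ℂ)))) ξ)
        = (Real.exp (-|ξ|) : ℂ) • (Matrix.of fun j k : Fin N => a (j.1 + k.1)) from by
      ext j k
      simp only [Matrix.of_apply, Matrix.smul_apply, smul_eq_mul]
      exact hentry j k]
    rw [Matrix.det_smul, Fintype.card_fin]
  rw [hdet]
  -- exponential cancellation
  have hexp : (Real.exp (N * |ξ|) : ℂ) * (Real.exp (-|ξ|) : ℂ) ^ N = 1 := by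
    rw [← Complex.ofReal_pow, ← Complex.ofReal_mul, ← Real.exp_nat_mul, ← Real.exp_add]
    norm_num
  -- sign square
  have hsign1 : (-1 : ℂ) ^ (N * (N - 1) / 2) * (-1 : ℂ) ^ (N * (N - 1) / 2) = 1 := by
    rw [← pow_add]
    exact Even.neg_one_pow ⟨N * (N - 1) / 2, by ring⟩
  -- rewrite RHS
  have hdet2 : Matrix.det (Matrix.of fun j k : Fin N => a (j.1 + k.1))
      = ∑ σ : Equiv.Perm (Fin N), ((Equiv.Perm.sign σ : ℤ) : ℂ) * ∏ k, a ((σ k).1 + k.1) := by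
    rw [Matrix.det_apply']
    rfl
  -- compute JN
  have hJN : JN N s ξ = (-1 : ℂ) ^ (N * (N - 1) / 2) *
      ∑ p : Equiv.Perm (Fin N) × Equiv.Perm (Fin N),
        ((Equiv.Perm.sign p.1 : ℤ) : ℂ) * ((Equiv.Perm.sign p.2 : ℤ) : ℂ) *
          ∏ k, a ((p.1 k).1 + (p.2 k).1) := by
    rw [JN]
    have hpt : ∀ x : Fin N → ℝ,
        (∏ j, Complex.exp (Complex.I * (ξ : ℂ) * (x j : ℂ)) *
          ((1 + (x j) ^ 2 : ℝ) : ℂ) ^ (-(s + (N : ℂ)))) *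
          ∏ j : Fin N, ∏ k ∈ Finset.Ioi j, ((x k - x j : ℝ) : ℂ) ^ 2
        = (-1 : ℂ) ^ (N * (N - 1) / 2) *
          ∑ p : Equiv.Perm (Fin N) × Equiv.Perm (Fin N),
            ((Equiv.Perm.sign p.1 : ℤ) : ℂ) * ((Equiv.Perm.sign p.2 : ℤ) : ℂ) *
              ∏ k, (dd δ (x k) ^ ((p.1 k).1 + (p.2 k).1) * v s N ξ (x k)) := by
      intro x
      rw [pointwise_sum s N δ ξ x, ← mul_assoc, hsign1, one_mul]
      rfl
    simp_rw [hpt]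
    rw [integral_const_mul]
    congr 1
    have hintp : ∀ p : Equiv.Perm (Fin N) × Equiv.Perm (Fin N),
        Integrable (fun x : Fin N → ℝ =>
          ((Equiv.Perm.sign p.1 : ℤ) : ℂ) * ((Equiv.Perm.sign p.2 : ℤ) : ℂ) *
            ∏ k, (dd δ (x k) ^ ((p.1 k).1 + (p.2 k).1) * v s N ξ (x k))) := by
      intro p
      apply Integrable.const_mul
      exact Integrable.fintype_prod (f := fun k (y : ℝ) =>
        dd δ y ^ ((p.1 k).1 + (p.2 k).1) * v s N ξ y)
        (fun k => integrable_dv s N hs hN δ ξ hδ2 (hidx (p.1 k) (p.2 k)))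
    rw [integral_finset_sum _ (fun p _ => hintp p)]
    apply Finset.sum_congr rfl
    intro p _
    rw [integral_const_mul]
    congr 1
    exact integral_fintype_prod_eq_prod (ι := Fin N)
      (fun k (y : ℝ) => dd δ y ^ ((p.1 k).1 + (p.2 k).1) * v s N ξ y)
  rw [hJN, perm_sum N a, hdet2]
  rw [show (-1 : ℂ) ^ (N * (N - 1) / 2) * (N.factorial : ℂ) * (Real.exp (N * |ξ|) : ℂ) *
      ((Real.exp (-|ξ|) : ℂ) ^ N *
        ∑ σ : Equiv.Perm (Fin N), ((Equiv.Perm.sign σ : ℤ) : ℂ) * ∏ k, a ((σ k).1 + k.1))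
      = (-1 : ℂ) ^ (N * (N - 1) / 2) * (N.factorial : ℂ) *
        (((Real.exp (N * |ξ|) : ℂ) * (Real.exp (-|ξ|) : ℂ) ^ N) *
        ∑ σ : Equiv.Perm (Fin N), ((Equiv.Perm.sign σ : ℤ) : ℂ) * ∏ k, a ((σ k).1 + k.1))
    from by ring, hexp, one_mul]
  ring
end

section
/- For every real λ > 1 one has (4/π) · ∫_0^1 log(λ−x) · √((1−x)/x) dx − 4λ + 2 + 4·log 2 = −4 · ∫_1^λ √((x−1)/x) dx, and in particular the left-hand side is strictly negative. -/
open MeasureTheory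

section Stmt11Aux

open Real Set intervalIntegral


lemma sqrtxx_pos {x : ℝ} (h0 : 0 < x) (h1 : x < 1) : 0 < √(x - x^2) :=
  Real.sqrt_pos.mpr (by nlinarith)

lemma sqrtxx_sq {x : ℝ} (h0 : 0 < x) (h1 : x < 1) : (√(x - x^2))^2 = x - x^2 :=
  Real.sq_sqrt (by nlinarith)

lemma arcsin_affine_deriv {x : ℝ} (h0 : 0 < x) (h1 : x < 1) :
    HasDerivAt (fun y : ℝ => arcsin (2*y - 1)) (1 / √(x - x^2)) x := by
  have hne1 : (2*x - 1 : ℝ) ≠ -1 := by intro h; nlinarith [h0, h1]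
  have hne2 : (2*x - 1 : ℝ) ≠ 1 := by intro h; nlinarith [h0, h1]
  have hin : HasDerivAt (fun y : ℝ => 2*y - 1) 2 x := by
    simpa using ((hasDerivAt_id x).const_mul 2).sub_const 1
  have h := (Real.hasDerivAt_arcsin hne1 hne2).comp x hin
  refine h.congr_deriv (Eq.symm ?_)
  have e : (1:ℝ) - (2*x - 1)^2 = 2^2 * (x - x^2) := by ring
  rw [e, Real.sqrt_mul (by positivity), Real.sqrt_sq (by norm_num : (0:ℝ) ≤ 2)]
  have hA := sqrtxx_pos h0 h1
  field_simp

lemma sqrt_poly_deriv {x : ℝ} (h0 : 0 < x) (h1 : x < 1) :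
    HasDerivAt (fun y : ℝ => √(y - y^2)) ((1 - 2*x)/(2*√(x - x^2))) x := by
  have hp : HasDerivAt (fun y : ℝ => y - y^2) (1 - 2*x) x := by
    exact ((hasDerivAt_id x).sub (hasDerivAt_pow 2 x)).congr_deriv (by norm_num)
  have h := (Real.hasDerivAt_sqrt (by nlinarith : x - x^2 ≠ 0)).comp x hp
  refine h.congr_deriv (Eq.symm ?_)
  field_simp

lemma innerInt {t : ℝ} (ht : 1 < t) :
    ∫ x in (0:ℝ)..1, √(x - x^2)/(t - x) = π * (t - 1/2 - √(t^2 - t)) := by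
  have htpos : 0 < t := lt_trans one_pos ht
  have hS2 : (√(t^2 - t))^2 = t^2 - t := Real.sq_sqrt (by nlinarith)
  have hSpos : 0 < √(t^2 - t) := Real.sqrt_pos.mpr (by nlinarith)
  have hdI : ∀ x ∈ Icc (0:ℝ) 1, t - x ≠ 0 := fun x hx => by
    have := hx.2; intro h; nlinarith
  have hcont : ContinuousOn (fun x : ℝ => -√(x - x^2) + (t - 1/2) * arcsin (2*x - 1)
      - √(t^2 - t) * arcsin (((2*t-1)*x - t)/(t - x))) (Icc 0 1) := by
    apply ContinuousOn.sub
    · apply Continuous.continuousOn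
      apply Continuous.add
      · exact (Real.continuous_sqrt.comp (continuous_id.sub (continuous_pow 2))).neg
      · exact continuous_const.mul (Real.continuous_arcsin.comp
          ((continuous_const.mul continuous_id).sub continuous_const))
    · apply ContinuousOn.mul continuousOn_const
      apply Real.continuous_arcsin.comp_continuousOn
      exact ContinuousOn.div
        ((continuous_const.mul continuous_id).sub continuous_const).continuousOn
        (continuous_const.sub continuous_id).continuousOn hdI
  have hderiv : ∀ x ∈ Ioo (0:ℝ) 1, HasDerivAt (fun x : ℝ => -√(x - x^2)
      + (t - 1/2) * arcsin (2*x - 1) - √(t^2 - t) * arcsin (((2*t-1)*x - t)/(t - x)))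
      (√(x - x^2)/(t - x)) x := by
    intro x hx
    obtain ⟨h0, h1⟩ := hx
    have hA2 := sqrtxx_sq h0 h1
    have hApos := sqrtxx_pos h0 h1
    have htx : (0:ℝ) < t - x := by nlinarith
    have d1 : HasDerivAt (fun y : ℝ => -√(y - y^2)) (-((1 - 2*x)/(2*√(x - x^2)))) x :=
      (sqrt_poly_deriv h0 h1).neg
    have d2 : HasDerivAt (fun y : ℝ => (t - 1/2) * arcsin (2*y - 1))
        ((t - 1/2) * (1/√(x - x^2))) x := (arcsin_affine_deriv h0 h1).const_mul _
    have dφ : HasDerivAt (fun y : ℝ => ((2*t-1)*y - t)/(t - y))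
        ((2*(t^2 - t))/(t - x)^2) x := by
      have hn : HasDerivAt (fun y : ℝ => (2*t-1)*y - t) (2*t-1) x := by
        simpa using ((hasDerivAt_id x).const_mul (2*t-1)).sub_const t
      have hdn : HasDerivAt (fun y : ℝ => t - y) (-1) x := by
        simpa using (hasDerivAt_id x).const_sub t
      have h := hn.div hdn (by positivity)
      refine h.congr_deriv (Eq.symm ?_)
      field_simp
      ring
    have hφ1 : ((2*t-1)*x - t)/(t - x) ≠ 1 := by
      intro h
      have := (div_eq_one_iff_eq (ne_of_gt htx)).mp h
      nlinarith
    have hφm1 : ((2*t-1)*x - t)/(t - x) ≠ -1 := by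
      intro h
      rw [div_eq_iff (ne_of_gt htx)] at h
      nlinarith
    have dar : HasDerivAt (fun y : ℝ => arcsin (((2*t-1)*y - t)/(t - y)))
        ((1 / √(1 - (((2*t-1)*x - t)/(t - x)) ^ 2)) * (2*(t^2 - t)/(t - x)^2)) x :=
      by have h := (Real.hasDerivAt_arcsin hφm1 hφ1).comp x dφ; exact h
    have hsq : √(1 - (((2*t-1)*x - t)/(t - x)) ^ 2) = 2*√(t^2-t)*√(x - x^2)/(t - x) := by
      have e : 1 - (((2*t-1)*x - t)/(t - x)) ^ 2 = (2*√(t^2-t)*√(x - x^2)/(t - x))^2 := by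
        field_simp
        nlinarith [Real.sq_sqrt (show (0:ℝ) ≤ t*(t-1) by nlinarith), Real.sq_sqrt (show (0:ℝ) ≤ x*(1-x) by nlinarith)]
      rw [e, Real.sqrt_sq (by positivity)]
    have d3 : HasDerivAt (fun y : ℝ => √(t^2-t) * arcsin (((2*t-1)*y - t)/(t - y)))
        ((t^2 - t)/(√(x - x^2) * (t - x))) x := by
      have H := dar.const_mul (√(t^2-t))
      rw [hsq] at H
      have e : √(t^2-t) * (1 / (2*√(t^2-t)*√(x - x^2)/(t - x)) * (2*(t^2 - t)/(t - x)^2))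
          = (t^2 - t)/(√(x - x^2) * (t - x)) := by
        set S := √(t^2-t) with hS
        set A := √(x - x^2) with hA
        field_simp
      rwa [e] at H
    have H := (d1.add d2).sub d3
    have e : -((1 - 2*x)/(2*√(x - x^2))) + (t - 1/2) * (1/√(x - x^2))
        - (t^2 - t)/(√(x - x^2) * (t - x)) = √(x - x^2)/(t - x) := by
      set A := √(x - x^2) with hA
      field_simp
      linear_combination (-2:ℝ) * hA2
    rwa [e] at H
  have hint : IntervalIntegrable (fun x => √(x - x^2)/(t - x)) volume 0 1 := by
    apply ContinuousOn.intervalIntegrable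
    rw [uIcc_of_le (by norm_num : (0:ℝ) ≤ 1)]
    exact ContinuousOn.div
      (Real.continuous_sqrt.comp (continuous_id.sub (continuous_pow 2))).continuousOn
      (continuous_const.sub continuous_id).continuousOn hdI
  rw [integral_eq_sub_of_hasDerivAt_of_le (by norm_num) hcont hderiv hint]
  have e1 : ((2*t-1)*1 - t)/(t - 1) = 1 := by
    rw [div_eq_one_iff_eq (by intro h; nlinarith : t - 1 ≠ 0)]; ring
  have e0 : ((2*t-1)*0 - t)/(t - 0) = -1 := by
    rw [div_eq_iff (by simpa using htpos.ne' : (t:ℝ) - 0 ≠ 0)]; ring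
  simp only [e1, e0, Real.arcsin_one, Real.arcsin_neg_one]
  norm_num
  ring

lemma sqrtxx_pos' {x : ℝ} (h0 : 0 < x) (h1 : x < 1) : 0 < √(x - x^2) :=
  Real.sqrt_pos.mpr (by nlinarith)

lemma sqrt_ratio {x : ℝ} (h0 : 0 < x) (h1 : x < 1) :
    √((1-x)/x) = (1-x)/√(x - x^2) := by
  rw [show (1-x)/x = (1-x)^2/(x - x^2) by rw [div_eq_div_iff (ne_of_gt h0) (by nlinarith)]; ring]
  rw [Real.sqrt_div (sq_nonneg _), Real.sqrt_sq (by linarith)]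

lemma integrable_sqrt_ratio : IntervalIntegrable (fun x : ℝ => √((1-x)/x)) volume 0 1 := by
  apply (intervalIntegrable_rpow' (by norm_num : (-1:ℝ) < -(1/2))).mono_fun
  · exact (Real.continuous_sqrt.measurable.comp ((measurable_const.sub measurable_id).div
      measurable_id)).aestronglyMeasurable
  · rw [uIoc_of_le (by norm_num : (0:ℝ) ≤ 1)]
    refine (ae_restrict_iff' measurableSet_Ioc).mpr (Filter.Eventually.of_forall fun x hx => ?_)
    have h0 : 0 < x := hx.1
    have h1 : x ≤ 1 := hx.2
    have e1 : ‖√((1-x)/x)‖ = √((1-x)/x) := Real.norm_of_nonneg (Real.sqrt_nonneg _)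
    have e2 : ‖x ^ (-(1/2) : ℝ)‖ = (√x)⁻¹ := by
      rw [Real.norm_of_nonneg (Real.rpow_nonneg h0.le _), Real.rpow_neg h0.le,
        ← Real.sqrt_eq_rpow]
    simp only [e1, e2, ← Real.sqrt_inv]
    apply Real.sqrt_le_sqrt
    rw [div_le_iff₀ h0, inv_mul_cancel₀ (ne_of_gt h0)]
    linarith

lemma halfInt : ∫ x in (0:ℝ)..1, √((1-x)/x) = π/2 := by
  have hcont : ContinuousOn (fun x : ℝ => √(x - x^2) + arcsin (2*x - 1)/2) (Icc 0 1) := by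
    apply Continuous.continuousOn
    exact (Real.continuous_sqrt.comp (continuous_id.sub (continuous_pow 2))).add
      ((Real.continuous_arcsin.comp ((continuous_const.mul continuous_id).sub
        continuous_const)).div_const 2)
  have hderiv : ∀ x ∈ Ioo (0:ℝ) 1, HasDerivAt (fun x : ℝ => √(x - x^2) + arcsin (2*x - 1)/2)
      (√((1-x)/x)) x := by
    intro x hx
    obtain ⟨h0, h1⟩ := hx
    have hApos := sqrtxx_pos' h0 h1
    have hA2 : (√(x - x^2))^2 = x - x^2 := Real.sq_sqrt (by nlinarith)
    have hp : HasDerivAt (fun y : ℝ => y - y^2) (1 - 2*x) x := by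
      exact ((hasDerivAt_id x).sub (hasDerivAt_pow 2 x)).congr_deriv (by norm_num)
    have d1 : HasDerivAt (fun y : ℝ => √(y - y^2)) ((1 - 2*x)/(2*√(x - x^2))) x := by
      have h := (Real.hasDerivAt_sqrt (by nlinarith : x - x^2 ≠ 0)).comp x hp
      refine h.congr_deriv (Eq.symm ?_)
      field_simp
    have hne1 : (2*x - 1 : ℝ) ≠ -1 := by intro h; nlinarith
    have hne2 : (2*x - 1 : ℝ) ≠ 1 := by intro h; nlinarith
    have hin : HasDerivAt (fun y : ℝ => 2*y - 1) 2 x := by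
      simpa using ((hasDerivAt_id x).const_mul 2).sub_const 1
    have d2' := ((Real.hasDerivAt_arcsin hne1 hne2).comp x hin).div_const 2
    have H := d1.add d2'
    have e : (1 - 2*x)/(2*√(x - x^2)) + 1 / √(1 - (2*x-1)^2) * 2 / 2 = √((1-x)/x) := by
      rw [show (1:ℝ) - (2*x - 1)^2 = 2^2 * (x - x^2) by ring,
        Real.sqrt_mul (by positivity), Real.sqrt_sq (by norm_num : (0:ℝ) ≤ 2),
        sqrt_ratio h0 h1]
      field_simp
      ring
    rwa [e] at H
  rw [integral_eq_sub_of_hasDerivAt_of_le (by norm_num) hcont hderiv integrable_sqrt_ratio]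
  norm_num [Real.arcsin_one, Real.arcsin_neg_one]
  ring

lemma logRep {lam x : ℝ} (hlam : 1 < lam) (h0 : 0 < x) (h1 : x < 1) :
    ∫ s in (0:ℝ)..1, x/(lam - s*x) = Real.log lam - Real.log (lam - x) := by
  have hpos : ∀ s ∈ uIcc (0:ℝ) 1, 0 < lam - s*x := by
    intro s hs
    rw [uIcc_of_le (by norm_num : (0:ℝ) ≤ 1)] at hs
    nlinarith [hs.1, hs.2]
  have hderiv : ∀ s ∈ uIcc (0:ℝ) 1, HasDerivAt (fun s : ℝ => -Real.log (lam - s*x))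
      (x/(lam - s*x)) s := by
    intro s hs
    have hin : HasDerivAt (fun s : ℝ => lam - s*x) (-x) s := by
      simpa using ((hasDerivAt_id s).mul_const x).const_sub lam
    have h := (hin.log (ne_of_gt (hpos s hs))).neg
    refine h.congr_deriv (Eq.symm ?_)
    field_simp
  have hint : IntervalIntegrable (fun s : ℝ => x/(lam - s*x)) volume 0 1 := by
    apply ContinuousOn.intervalIntegrable
    exact ContinuousOn.div continuousOn_const
      (continuous_const.sub (continuous_id.mul continuous_const)).continuousOn
      (fun s hs => ne_of_gt (hpos s hs))
  rw [integral_eq_sub_of_hasDerivAt hderiv hint]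
  norm_num
  ring

lemma outerInt {lam : ℝ} (hlam : 1 < lam) :
    ∫ s in (0:ℝ)..1, (2*lam*(1 + √(1 - s/lam))^2)⁻¹
      = (-(1 + √(1 - 1/lam))⁻¹ - Real.log (1 + √(1 - 1/lam))) - (-(1/2) - Real.log 2) := by
  have hlam0 : (0:ℝ) < lam := lt_trans one_pos hlam
  have h1r : ∀ s : ℝ, (0:ℝ) < 1 + √(1 - s/lam) := fun s => by
    have := Real.sqrt_nonneg (1 - s/lam); linarith
  have hrc : Continuous (fun s : ℝ => √(1 - s/lam)) :=
    Real.continuous_sqrt.comp (continuous_const.sub (continuous_id.div_const lam))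
  have hcont : ContinuousOn (fun s : ℝ => -(1 + √(1 - s/lam))⁻¹
      - Real.log (1 + √(1 - s/lam))) (Icc 0 1) := by
    apply ContinuousOn.sub
    · exact (((continuous_const.add hrc).continuousOn).inv₀
        (fun s _ => ne_of_gt (h1r s))).neg
    · exact ContinuousOn.log ((continuous_const.add hrc).continuousOn)
        (fun s _ => ne_of_gt (h1r s))
  have hderiv : ∀ s ∈ Ioo (0:ℝ) 1, HasDerivAt (fun s : ℝ => -(1 + √(1 - s/lam))⁻¹
      - Real.log (1 + √(1 - s/lam))) ((2*lam*(1 + √(1 - s/lam))^2)⁻¹) s := by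
    intro s hs
    obtain ⟨hs0, hs1⟩ := hs
    have hin : (0:ℝ) < 1 - s/lam := by
      rw [sub_pos, div_lt_one hlam0]; linarith
    have hrpos : 0 < √(1 - s/lam) := Real.sqrt_pos.mpr hin
    have dlin : HasDerivAt (fun s : ℝ => 1 - s/lam) (-(1/lam)) s := by
      simpa using ((hasDerivAt_id s).div_const lam).const_sub 1
    have dr : HasDerivAt (fun s : ℝ => √(1 - s/lam)) (-(1/lam)/(2*√(1 - s/lam))) s := by
      have h := (Real.hasDerivAt_sqrt (ne_of_gt hin)).comp s dlin
      refine h.congr_deriv (Eq.symm ?_)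
      ring
    have d1r : HasDerivAt (fun s : ℝ => 1 + √(1 - s/lam)) (-(1/lam)/(2*√(1 - s/lam))) s :=
      dr.const_add 1
    have dA : HasDerivAt (fun s : ℝ => -(1 + √(1 - s/lam))⁻¹)
        ((-(1/lam)/(2*√(1 - s/lam)))/(1 + √(1 - s/lam))^2) s := by
      have h := (d1r.inv (ne_of_gt (h1r s))).neg
      refine h.congr_deriv (Eq.symm ?_)
      ring
    have dB : HasDerivAt (fun s : ℝ => Real.log (1 + √(1 - s/lam)))
        ((-(1/lam)/(2*√(1 - s/lam)))/(1 + √(1 - s/lam))) s :=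
      d1r.log (ne_of_gt (h1r s))
    have H := dA.sub dB
    have e : (-(1/lam)/(2*√(1 - s/lam)))/(1 + √(1 - s/lam))^2
        - (-(1/lam)/(2*√(1 - s/lam)))/(1 + √(1 - s/lam))
        = (2*lam*(1 + √(1 - s/lam))^2)⁻¹ := by
      set r := √(1 - s/lam) with hrdef
      have hr0 : r ≠ 0 := ne_of_gt hrpos
      have h1r0 : (1:ℝ) + r ≠ 0 := ne_of_gt (h1r s)
      field_simp
      ring
    rwa [e] at H
  have hint : IntervalIntegrable (fun s : ℝ => (2*lam*(1 + √(1 - s/lam))^2)⁻¹) volume 0 1 := by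
    apply ContinuousOn.intervalIntegrable
    apply ContinuousOn.inv₀
    · exact ((continuous_const.mul ((continuous_const.add hrc).pow 2))).continuousOn
    · intro s _
      have := h1r s
      positivity
  rw [integral_eq_sub_of_hasDerivAt_of_le (by norm_num) hcont hderiv hint]
  norm_num

lemma Jval {lam : ℝ} (hlam : 1 < lam) :
    ∫ x in (1:ℝ)..lam, √((x-1)/x)
      = lam - (1 + √(1 - 1/lam))⁻¹ - Real.log (1 + √(1 - 1/lam)) - (1/2) * Real.log lam := by
  have hlam0 : (0:ℝ) < lam := lt_trans one_pos hlam
  have h1r : ∀ t : ℝ, (0:ℝ) < 1 + √(1 - 1/t) := fun t => by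
    have := Real.sqrt_nonneg (1 - 1/t); linarith
  have hne : ∀ t ∈ Icc (1:ℝ) lam, t ≠ 0 := fun t ht =>
    ne_of_gt (lt_of_lt_of_le one_pos ht.1)
  have hcont : ContinuousOn (fun t : ℝ => t - (1 + √(1 - 1/t))⁻¹
      - Real.log (1 + √(1 - 1/t)) - (1/2) * Real.log t) (Icc 1 lam) := by
    have hrc : ContinuousOn (fun t : ℝ => 1 + √(1 - 1/t)) (Icc 1 lam) :=
      continuousOn_const.add (Real.continuous_sqrt.comp_continuousOn
        (continuousOn_const.sub (continuousOn_const.div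
          (continuous_id.continuousOn) hne)))
    apply ContinuousOn.sub
    apply ContinuousOn.sub
    apply ContinuousOn.sub (continuous_id.continuousOn)
    · exact hrc.inv₀ (fun t ht => ne_of_gt (h1r t))
    · exact hrc.log (fun t ht => ne_of_gt (h1r t))
    · exact continuousOn_const.mul (ContinuousOn.log (continuous_id.continuousOn) hne)
  have hderiv : ∀ t ∈ Ioo (1:ℝ) lam, HasDerivAt (fun t : ℝ => t - (1 + √(1 - 1/t))⁻¹
      - Real.log (1 + √(1 - 1/t)) - (1/2) * Real.log t) (√((t-1)/t)) t := by
    intro t ht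
    obtain ⟨ht1, htlam⟩ := ht
    have ht0 : (0:ℝ) < t := lt_trans one_pos ht1
    have hin : (0:ℝ) < 1 - 1/t := by
      rw [sub_pos, div_lt_one ht0]; linarith
    have hrpos : 0 < √(1 - 1/t) := Real.sqrt_pos.mpr hin
    have hr2 : (√(1 - 1/t))^2 = 1 - 1/t := Real.sq_sqrt hin.le
    have dlin : HasDerivAt (fun t : ℝ => 1 - 1/t) (1/t^2) t := by
      have h := (hasDerivAt_inv (ne_of_gt ht0)).const_sub 1
      convert h using 1
      · rfl
      · rfl
      · funext y; ring
      · ring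
    have dr : HasDerivAt (fun t : ℝ => √(1 - 1/t)) ((1/t^2)/(2*√(1 - 1/t))) t := by
      have h := (Real.hasDerivAt_sqrt (ne_of_gt hin)).comp t dlin
      refine h.congr_deriv (Eq.symm ?_)
      ring
    have d1r : HasDerivAt (fun t : ℝ => 1 + √(1 - 1/t)) ((1/t^2)/(2*√(1 - 1/t))) t :=
      dr.const_add 1
    have dA : HasDerivAt (fun t : ℝ => (1 + √(1 - 1/t))⁻¹)
        (-(((1/t^2)/(2*√(1 - 1/t)))/(1 + √(1 - 1/t))^2)) t := by
      have h := d1r.inv (ne_of_gt (h1r t))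
      refine h.congr_deriv (Eq.symm ?_)
      ring
    have dB : HasDerivAt (fun t : ℝ => Real.log (1 + √(1 - 1/t)))
        (((1/t^2)/(2*√(1 - 1/t)))/(1 + √(1 - 1/t))) t :=
      d1r.log (ne_of_gt (h1r t))
    have dC : HasDerivAt (fun t : ℝ => (1/2) * Real.log t) ((1/2) * (1/t)) t := by
      have h := (Real.hasDerivAt_log (ne_of_gt ht0)).const_mul (1/2:ℝ)
      refine h.congr_deriv (Eq.symm ?_)
      ring
    have H := (((hasDerivAt_id' t).sub dA).sub dB).sub dC
    have e : 1 - (-(((1/t^2)/(2*√(1 - 1/t)))/(1 + √(1 - 1/t))^2))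
        - ((1/t^2)/(2*√(1 - 1/t)))/(1 + √(1 - 1/t)) - (1/2) * (1/t) = √((t-1)/t) := by
      have hrt : √((t-1)/t) = √(1 - 1/t) := by
        congr 1
        field_simp
      rw [hrt]
      set r := √(1 - 1/t) with hrdef
      have hr0 : r ≠ 0 := ne_of_gt hrpos
      have h1r0 : (1:ℝ) + r ≠ 0 := ne_of_gt (h1r t)
      have hr2' : t * r^2 = t - 1 := by rw [hr2]; field_simp
      field_simp
      linear_combination (-r*(1 + 2*t*(1 + r)) : ℝ) * hr2'
    rwa [e] at H
  have hint : IntervalIntegrable (fun t : ℝ => √((t-1)/t)) volume 1 lam := by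
    apply ContinuousOn.intervalIntegrable
    rw [uIcc_of_le hlam.le]
    apply Real.continuous_sqrt.comp_continuousOn
    exact ContinuousOn.div (continuous_id.continuousOn.sub continuousOn_const)
      (continuous_id.continuousOn) hne
  rw [integral_eq_sub_of_hasDerivAt_of_le hlam.le hcont hderiv hint]
  norm_num


lemma innerIntS {lam s : ℝ} (hlam : 1 < lam) (hs0 : 0 < s) (hs1 : s < 1) :
    ∫ x in Ioo (0:ℝ) 1, √(x - x^2)/(lam - s*x)
      = π * (2*lam*(1 + √(1 - s/lam))^2)⁻¹ := by
  have hlam0 : (0:ℝ) < lam := lt_trans one_pos hlam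
  have ht : 1 < lam/s := (one_lt_div hs0).mpr (by linarith)
  have e1 : (fun x : ℝ => √(x - x^2)/(lam - s*x))
      = (fun x : ℝ => (1/s) * (√(x - x^2)/(lam/s - x))) := by
    funext x
    rw [show lam - s*x = s*(lam/s - x) by field_simp]
    rw [div_eq_mul_inv, div_eq_mul_inv, mul_inv]
    ring
  rw [e1, MeasureTheory.integral_const_mul]
  rw [show ∫ x in Ioo (0:ℝ) 1, (√(x - x^2)/(lam/s - x))
      = ∫ x in (0:ℝ)..1, (√(x - x^2)/(lam/s - x)) by
    rw [intervalIntegral.integral_of_le (by norm_num), integral_Ioc_eq_integral_Ioo]]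
  rw [innerInt ht]
  have hin : (0:ℝ) ≤ 1 - s/lam := by
    rw [sub_nonneg, div_le_one hlam0]; linarith
  have hrpos : 0 < √(1 - s/lam) := Real.sqrt_pos.mpr (by
    rw [sub_pos, div_lt_one hlam0]; linarith)
  have hr2 : (√(1 - s/lam))^2 = 1 - s/lam := Real.sq_sqrt hin
  set r := √(1 - s/lam) with hrdef
  have hr2' : lam * r^2 = lam - s := by
    rw [hr2]; field_simp
  have hsqrt : √((lam/s)^2 - lam/s) = lam*r/s := by
    rw [show (lam/s)^2 - lam/s = (lam*r/s)^2 by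
      field_simp
      linear_combination (-1 : ℝ) * hr2']
    exact Real.sqrt_sq (by positivity)
  rw [hsqrt]
  have h1r : (0:ℝ) < 1 + r := by linarith
  field_simp
  linear_combination (-2*lam*r - s - 2*lam : ℝ) * hr2'

end Stmt11Aux

open Real Set intervalIntegral in
/-- (Variational inequality on `(1,∞)`.) For every `λ > 1`,
`(4/π) ∫_0^1 log(λ-x) √((1-x)/x) dx - 4λ + 2 + 4 log 2 = -4 ∫_1^λ √((x-1)/x) dx`,
and in particular the left-hand side is strictly negative. -/
theorem stmt_11 (lam : ℝ) (hlam : 1 < lam) :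
    ((4 / Real.pi) *
        (∫ x in Set.Ioo (0 : ℝ) 1, Real.log (lam - x) * Real.sqrt ((1 - x) / x)) -
        4 * lam + 2 + 4 * Real.log 2 =
      -4 * ∫ x in (1 : ℝ)..lam, Real.sqrt ((x - 1) / x)) ∧
    ((4 / Real.pi) *
        (∫ x in Set.Ioo (0 : ℝ) 1, Real.log (lam - x) * Real.sqrt ((1 - x) / x)) -
        4 * lam + 2 + 4 * Real.log 2 < 0) := by
  have hlam0 : (0:ℝ) < lam := lt_trans one_pos hlam
  -- finiteness of the restricted measure
  haveI hfin : IsFiniteMeasure (volume.restrict (Ioo (0:ℝ) 1)) := by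
    constructor
    rw [Measure.restrict_apply_univ, Real.volume_Ioo]
    norm_num
  -- the product integrand
  have hTmeas : Measurable (fun p : ℝ × ℝ => √(p.1 - p.1^2)/(lam - p.2*p.1)) := by
    apply Measurable.div
    · exact Real.continuous_sqrt.measurable.comp
        (measurable_fst.sub (measurable_fst.pow_const 2))
    · exact measurable_const.sub (measurable_snd.mul measurable_fst)
  have hTint : Integrable (fun p : ℝ × ℝ => √(p.1 - p.1^2)/(lam - p.2*p.1))
      ((volume.restrict (Ioo (0:ℝ) 1)).prod (volume.restrict (Ioo (0:ℝ) 1))) := by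
    apply Integrable.mono' (integrable_const ((2*(lam-1))⁻¹))
      hTmeas.aestronglyMeasurable
    rw [Measure.prod_restrict]
    refine (ae_restrict_iff' (measurableSet_Ioo.prod measurableSet_Ioo)).mpr
      (Filter.Eventually.of_forall fun p hp => ?_)
    obtain ⟨⟨hx0, hx1⟩, ⟨hs0, hs1⟩⟩ := hp
    have h1 : √(p.1 - p.1^2) ≤ 1/2 := by
      rw [show (1:ℝ)/2 = √((1/2)^2) by rw [Real.sqrt_sq]; norm_num]
      apply Real.sqrt_le_sqrt
      nlinarith [sq_nonneg (p.1 - 1/2)]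
    have h2 : lam - 1 ≤ lam - p.2*p.1 := by nlinarith
    have h3 : (0:ℝ) < lam - 1 := by linarith
    rw [Real.norm_eq_abs, abs_div, abs_of_nonneg (Real.sqrt_nonneg _),
      abs_of_pos (by linarith : (0:ℝ) < lam - p.2*p.1)]
    rw [div_le_iff₀ (by linarith), inv_eq_one_div, div_mul_eq_mul_div, le_div_iff₀ (by linarith)]
    nlinarith [Real.sqrt_nonneg (p.1 - p.1^2)]
  -- pointwise rewriting of the integrand
  have key1 : ∫ x in Ioo (0:ℝ) 1, Real.log (lam - x) * √((1-x)/x)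
      = ∫ x in Ioo (0:ℝ) 1, (Real.log lam * √((1-x)/x)
          - ∫ s in Ioo (0:ℝ) 1, √(x - x^2)/(lam - s*x)) := by
    apply setIntegral_congr_fun measurableSet_Ioo
    intro x hx
    obtain ⟨h0, h1⟩ := hx
    dsimp only
    have hApos : 0 < √(x - x^2) := Real.sqrt_pos.mpr (by nlinarith)
    have hA2 : (√(x - x^2))^2 = x - x^2 := Real.sq_sqrt (by nlinarith)
    have hlog : ∫ s in Ioo (0:ℝ) 1, x/(lam - s*x)
        = Real.log lam - Real.log (lam - x) := by
      rw [← integral_Ioc_eq_integral_Ioo, ← intervalIntegral.integral_of_le (by norm_num)]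
      exact logRep hlam h0 h1
    have hnum : √((1-x)/x) * x = √(x - x^2) := by
      rw [sqrt_ratio h0 h1]
      rw [div_mul_eq_mul_div, eq_comm, eq_div_iff (ne_of_gt hApos)]
      nlinarith [hA2]
    have hsub : ∫ s in Ioo (0:ℝ) 1, √(x - x^2)/(lam - s*x)
        = √((1-x)/x) * ∫ s in Ioo (0:ℝ) 1, x/(lam - s*x) := by
      rw [← MeasureTheory.integral_const_mul]
      congr 1
      funext s
      rw [mul_div_assoc', hnum]
    rw [hsub, hlog]
    ring
  -- integrability of both pieces
  have hsq_int : IntegrableOn (fun x : ℝ => √((1-x)/x)) (Ioo (0:ℝ) 1) := by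
    have h2 : IntegrableOn (fun x : ℝ => √((1-x)/x)) (Ioc (0:ℝ) 1) :=
      (intervalIntegrable_iff_integrableOn_Ioc_of_le (by norm_num)).mp integrable_sqrt_ratio
    exact h2.mono_set Ioo_subset_Ioc_self
  have hg : IntegrableOn (fun x : ℝ => Real.log lam * √((1-x)/x)) (Ioo (0:ℝ) 1) :=
    hsq_int.const_mul _
  have hh : IntegrableOn (fun x : ℝ => ∫ s in Ioo (0:ℝ) 1, √(x - x^2)/(lam - s*x))
      (Ioo (0:ℝ) 1) := hTint.integral_prod_left
  -- split the integral
  have key2 : ∫ x in Ioo (0:ℝ) 1, (Real.log lam * √((1-x)/x)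
          - ∫ s in Ioo (0:ℝ) 1, √(x - x^2)/(lam - s*x))
      = Real.log lam * (π/2)
        - ∫ x in Ioo (0:ℝ) 1, ∫ s in Ioo (0:ℝ) 1, √(x - x^2)/(lam - s*x) := by
    rw [integral_sub hg hh, MeasureTheory.integral_const_mul]
    congr 2
    rw [← halfInt, intervalIntegral.integral_of_le (by norm_num),
      integral_Ioc_eq_integral_Ioo]
  -- Fubini
  have key3 : ∫ x in Ioo (0:ℝ) 1, ∫ s in Ioo (0:ℝ) 1, √(x - x^2)/(lam - s*x)
      = ∫ s in Ioo (0:ℝ) 1, ∫ x in Ioo (0:ℝ) 1, √(x - x^2)/(lam - s*x) :=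
    MeasureTheory.integral_integral_swap hTint
  -- evaluate the s-integral
  have key4 : ∫ s in Ioo (0:ℝ) 1, ∫ x in Ioo (0:ℝ) 1, √(x - x^2)/(lam - s*x)
      = π * ((-(1 + √(1 - 1/lam))⁻¹ - Real.log (1 + √(1 - 1/lam)))
          - (-(1/2) - Real.log 2)) := by
    rw [setIntegral_congr_fun measurableSet_Ioo
      (fun s hs => innerIntS hlam hs.1 hs.2)]
    rw [MeasureTheory.integral_const_mul]
    congr 1
    rw [← outerInt hlam, intervalIntegral.integral_of_le (by norm_num),
      integral_Ioc_eq_integral_Ioo]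
  have keyI : ∫ x in Ioo (0:ℝ) 1, Real.log (lam - x) * √((1-x)/x)
      = Real.log lam * (π/2)
        - π * ((-(1 + √(1 - 1/lam))⁻¹ - Real.log (1 + √(1 - 1/lam)))
          - (-(1/2) - Real.log 2)) := by
    rw [key1, key2, key3, key4]
  have hJ := Jval hlam
  have hmain : (4 / Real.pi) *
        (∫ x in Set.Ioo (0 : ℝ) 1, Real.log (lam - x) * Real.sqrt ((1 - x) / x)) -
        4 * lam + 2 + 4 * Real.log 2 =
      -4 * ∫ x in (1 : ℝ)..lam, Real.sqrt ((x - 1) / x) := by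
    rw [keyI, hJ]
    field_simp
    ring
  refine ⟨hmain, ?_⟩
  rw [hmain]
  have hJpos : 0 < ∫ x in (1:ℝ)..lam, √((x-1)/x) := by
    apply intervalIntegral_pos_of_pos_on _ _ hlam
    · apply ContinuousOn.intervalIntegrable
      rw [uIcc_of_le hlam.le]
      apply Real.continuous_sqrt.comp_continuousOn
      exact ContinuousOn.div (continuous_id.continuousOn.sub continuousOn_const)
        (continuous_id.continuousOn)
        (fun t ht => ne_of_gt (lt_of_lt_of_le one_pos ht.1))
    · intro x hx
      exact Real.sqrt_pos.mpr (div_pos (by linarith [hx.1]) (by linarith [hx.1]))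
  linarith
end

section
/- Let m ∈ ℕ and set n = 2m. Let u : ℝ → ℂ be n-times continuously differentiable and suppose there are constants C, c > 0 such that ‖u^{(k)}(t)‖ ≤ C·e^{−c t} for all t ≥ 0 and all 0 ≤ k ≤ n, and that u^{(k)}(0) = 0 for every odd k with k < n. Then lim_{ε↓0} ∫_0^∞ K_n^ε(t) · u(t) dt = ((−1)^m / 2) · u^{(n)}(0). -/
open MeasureTheory

section Aux
open MeasureTheory Complex Set Filter

lemma hasDerivAt_a {ε : ℝ} (hε : 0 < ε) (k : ℕ) (t : ℝ) :
    HasDerivAt (fun s : ℝ => ((ε:ℂ) + I * s) ^ (-(k+1) : ℤ))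
      ((-(k+1) : ℤ) * I * ((ε:ℂ) + I * t) ^ (-(k+2) : ℤ)) t := by
  have hne : (ε:ℂ) + I * t ≠ 0 := by
    intro h; have := congrArg Complex.re h; simp at this; exact hε.ne' this
  have hinner : HasDerivAt (fun s : ℝ => (ε:ℂ) + I * s) I t := by
    simpa using ((Complex.ofRealCLM.hasDerivAt (x := t)).const_mul I).const_add (ε:ℂ)
  have houter := hasDerivAt_zpow (-(k+1) : ℤ) ((ε:ℂ) + I * t) (Or.inl hne)
  have h := HasDerivAt.comp t houter hinner
  refine h.congr_deriv ?_
  rw [show (-(k+1:ℤ) - 1) = -(k+2:ℤ) by ring]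
  ring

lemma hasDerivAt_b {ε : ℝ} (hε : 0 < ε) (k : ℕ) (t : ℝ) :
    HasDerivAt (fun s : ℝ => ((ε:ℂ) - I * s) ^ (-(k+1) : ℤ))
      (((k:ℂ)+1) * I * ((ε:ℂ) - I * t) ^ (-(k+2) : ℤ)) t := by
  have hne : (ε:ℂ) - I * t ≠ 0 := by
    intro h; have := congrArg Complex.re h; simp at this; exact hε.ne' this
  have hinner : HasDerivAt (fun s : ℝ => (ε:ℂ) - I * s) (-I) t := by
    simpa using (((Complex.ofRealCLM.hasDerivAt (x := t)).const_mul I).const_sub (ε:ℂ))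
  have houter := hasDerivAt_zpow (-(k+1) : ℤ) ((ε:ℂ) - I * t) (Or.inl hne)
  have h := HasDerivAt.comp t houter hinner
  refine h.congr_deriv ?_
  rw [show (-(k+1:ℤ) - 1) = -(k+2:ℤ) by ring]
  push_cast
  ring

lemma norm_zpow_le {ε : ℝ} (hε : 0 < ε) (k : ℕ) {z : ℂ} (hz : ε ≤ ‖z‖) :
    ‖z ^ (-(k+1) : ℤ)‖ ≤ (ε ^ (k+1))⁻¹ := by
  rw [norm_zpow]
  rw [show (-(k+1) : ℤ) = -((k+1 : ℕ) : ℤ) by push_cast; ring, zpow_neg, zpow_natCast]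
  exact inv_anti₀ (pow_pos hε _) (pow_le_pow_left₀ hε.le hz _)

lemma eps_le_norm_add {ε : ℝ} (t : ℝ) : ε ≤ ‖(ε:ℂ) + I * t‖ := by
  have h := Complex.abs_re_le_norm ((ε:ℂ) + I * t)
  simp only [Complex.add_re, Complex.ofReal_re, Complex.mul_re, Complex.I_re, Complex.I_im,
    Complex.ofReal_im, zero_mul, one_mul, mul_zero] at h
  refine le_trans (le_abs_self ε) ?_
  simpa using h

lemma eps_le_norm_sub {ε : ℝ} (t : ℝ) : ε ≤ ‖(ε:ℂ) - I * t‖ := by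
  have h := Complex.abs_re_le_norm ((ε:ℂ) - I * t)
  simp only [Complex.sub_re, Complex.ofReal_re, Complex.mul_re, Complex.I_re, Complex.I_im,
    Complex.ofReal_im, zero_mul, one_mul, mul_zero] at h
  refine le_trans (le_abs_self ε) ?_
  simpa using h

lemma exp_decay_tendsto {c : ℝ} (hc : 0 < c) (K : ℝ) :
    Tendsto (fun t : ℝ => K * Real.exp (-c * t)) atTop (nhds 0) := by
  have h1 : Tendsto (fun t : ℝ => c * t) atTop atTop :=
    Tendsto.const_mul_atTop hc tendsto_id
  have h2 : Tendsto (fun t : ℝ => Real.exp (-(c * t))) atTop (nhds 0) :=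
    Real.tendsto_exp_neg_atTop_nhds_zero.comp h1
  simpa [neg_mul] using h2.const_mul K

lemma integrable_decay {c : ℝ} (hc : 0 < c) {f : ℝ → ℂ}
    (hf : AEStronglyMeasurable f (volume.restrict (Ioi 0)))
    {K : ℝ} (hK : ∀ t ∈ Ioi (0:ℝ), ‖f t‖ ≤ K * Real.exp (-c * t)) :
    IntegrableOn f (Ioi 0) := by
  refine Integrable.mono' ((exp_neg_integrableOn_Ioi 0 hc).const_mul K) hf ?_
  filter_upwards [ae_restrict_mem measurableSet_Ioi] with t ht
  exact hK t ht

lemma cont_a {ε : ℝ} (hε : 0 < ε) (k : ℕ) :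
    Continuous (fun t : ℝ => ((ε:ℂ) + I * t) ^ (-(k+1) : ℤ)) :=
  continuous_iff_continuousAt.2 fun t => (hasDerivAt_a hε k t).continuousAt

lemma cont_b {ε : ℝ} (hε : 0 < ε) (k : ℕ) :
    Continuous (fun t : ℝ => ((ε:ℂ) - I * t) ^ (-(k+1) : ℤ)) :=
  continuous_iff_continuousAt.2 fun t => (hasDerivAt_b hε k t).continuousAt

lemma integrable_a_mul {ε c C : ℝ} (hε : 0 < ε) (hc : 0 < c) {g : ℝ → ℂ}
    (hgc : Continuous g) (hgb : ∀ t, 0 ≤ t → ‖g t‖ ≤ C * Real.exp (-c * t)) (k : ℕ) :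
    IntegrableOn (fun t : ℝ => ((ε:ℂ) + I * t) ^ (-(k+1) : ℤ) * g t) (Ioi 0) := by
  refine integrable_decay hc (Continuous.aestronglyMeasurable ?_) (K := (ε ^ (k+1))⁻¹ * C) ?_
  · exact (cont_a hε k).mul hgc
  · intro t ht
    rw [norm_mul, mul_assoc]
    exact mul_le_mul (norm_zpow_le hε k (eps_le_norm_add t)) (hgb t (le_of_lt ht))
      (norm_nonneg _) (by positivity)

lemma integrable_b_mul {ε c C : ℝ} (hε : 0 < ε) (hc : 0 < c) {g : ℝ → ℂ}
    (hgc : Continuous g) (hgb : ∀ t, 0 ≤ t → ‖g t‖ ≤ C * Real.exp (-c * t)) (k : ℕ) :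
    IntegrableOn (fun t : ℝ => ((ε:ℂ) - I * t) ^ (-(k+1) : ℤ) * g t) (Ioi 0) := by
  refine integrable_decay hc (Continuous.aestronglyMeasurable ?_) (K := (ε ^ (k+1))⁻¹ * C) ?_
  · exact (cont_b hε k).mul hgc
  · intro t ht
    rw [norm_mul, mul_assoc]
    exact mul_le_mul (norm_zpow_le hε k (eps_le_norm_sub t)) (hgb t (le_of_lt ht))
      (norm_nonneg _) (by positivity)

lemma step_a {ε c C : ℝ} (hε : 0 < ε) (hc : 0 < c) {g G : ℝ → ℂ}
    (hg : ∀ t, HasDerivAt g (G t) t) (hgc : Continuous g) (hGc : Continuous G)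
    (hgb : ∀ t, 0 ≤ t → ‖g t‖ ≤ C * Real.exp (-c * t))
    (hGb : ∀ t, 0 ≤ t → ‖G t‖ ≤ C * Real.exp (-c * t)) (k : ℕ) :
    ∫ t in Ioi (0:ℝ), ((ε:ℂ) + I * t) ^ (-(k+2) : ℤ) * g t
      = (((k:ℂ)+1) * I)⁻¹ *
        ((∫ t in Ioi (0:ℝ), ((ε:ℂ) + I * t) ^ (-(k+1) : ℤ) * G t)
          + (ε:ℂ) ^ (-(k+1) : ℤ) * g 0) := by
  set c₁ : ℂ := (-(k+1) : ℤ) * I with hc₁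
  have hF : ∀ t : ℝ, HasDerivAt (fun s : ℝ => ((ε:ℂ) + I * s) ^ (-(k+1) : ℤ) * g s)
      (c₁ * (((ε:ℂ) + I * t) ^ (-(k+2) : ℤ) * g t)
        + ((ε:ℂ) + I * t) ^ (-(k+1) : ℤ) * G t) t := by
    intro t
    have := (hasDerivAt_a hε k t).mul (hg t)
    refine this.congr_deriv ?_
    ring
  have hint1 : IntegrableOn (fun t : ℝ => ((ε:ℂ) + I * t) ^ (-(k+2) : ℤ) * g t) (Ioi 0) := by
    have := integrable_a_mul hε hc hgc hgb (k+1)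
    simpa [show ((k:ℤ)+1+1) = (k+2 : ℤ) by ring] using this
  have hint2 : IntegrableOn (fun t : ℝ => ((ε:ℂ) + I * t) ^ (-(k+1) : ℤ) * G t) (Ioi 0) :=
    integrable_a_mul hε hc hGc hGb k
  have hint : IntegrableOn (fun t : ℝ =>
      c₁ * (((ε:ℂ) + I * t) ^ (-(k+2) : ℤ) * g t)
        + ((ε:ℂ) + I * t) ^ (-(k+1) : ℤ) * G t) (Ioi 0) :=
    (hint1.const_mul c₁).add hint2
  have htend : Tendsto (fun t : ℝ => ((ε:ℂ) + I * t) ^ (-(k+1) : ℤ) * g t) atTop (nhds 0) := by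
    refine squeeze_zero_norm' (a := fun t => (ε ^ (k+1))⁻¹ * (C * Real.exp (-c * t))) ?_ ?_
    · filter_upwards [eventually_ge_atTop (0:ℝ)] with t ht
      rw [norm_mul]
      exact mul_le_mul (norm_zpow_le hε k (eps_le_norm_add t)) (hgb t ht)
        (norm_nonneg _) (by positivity)
    · simpa [mul_assoc] using exp_decay_tendsto hc ((ε ^ (k+1))⁻¹ * C)
  have key := integral_Ioi_of_hasDerivAt_of_tendsto' (fun t _ => hF t) hint htend
  rw [integral_add (hint1.const_mul c₁) hint2, integral_const_mul] at key
  have h0 : ((ε:ℂ) + I * (0:ℝ)) ^ (-(k+1) : ℤ) = (ε:ℂ) ^ (-(k+1) : ℤ) := by norm_num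
  rw [h0] at key
  have hne : ((k:ℂ)+1) * I ≠ 0 :=
    mul_ne_zero (Nat.cast_add_one_ne_zero k) I_ne_zero
  have hc₁' : c₁ = -(((k:ℂ)+1) * I) := by rw [hc₁]; push_cast; ring
  rw [hc₁'] at key
  field_simp at key ⊢
  linear_combination -key

lemma step_b {ε c C : ℝ} (hε : 0 < ε) (hc : 0 < c) {g G : ℝ → ℂ}
    (hg : ∀ t, HasDerivAt g (G t) t) (hgc : Continuous g) (hGc : Continuous G)
    (hgb : ∀ t, 0 ≤ t → ‖g t‖ ≤ C * Real.exp (-c * t))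
    (hGb : ∀ t, 0 ≤ t → ‖G t‖ ≤ C * Real.exp (-c * t)) (k : ℕ) :
    ∫ t in Ioi (0:ℝ), ((ε:ℂ) - I * t) ^ (-(k+2) : ℤ) * g t
      = -((((k:ℂ)+1) * I)⁻¹) *
        ((∫ t in Ioi (0:ℝ), ((ε:ℂ) - I * t) ^ (-(k+1) : ℤ) * G t)
          + (ε:ℂ) ^ (-(k+1) : ℤ) * g 0) := by
  set c₂ : ℂ := ((k:ℂ)+1) * I with hc₂
  have hF : ∀ t : ℝ, HasDerivAt (fun s : ℝ => ((ε:ℂ) - I * s) ^ (-(k+1) : ℤ) * g s)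
      (c₂ * (((ε:ℂ) - I * t) ^ (-(k+2) : ℤ) * g t)
        + ((ε:ℂ) - I * t) ^ (-(k+1) : ℤ) * G t) t := by
    intro t
    have := (hasDerivAt_b hε k t).mul (hg t)
    refine this.congr_deriv ?_
    ring
  have hint1 : IntegrableOn (fun t : ℝ => ((ε:ℂ) - I * t) ^ (-(k+2) : ℤ) * g t) (Ioi 0) := by
    have := integrable_b_mul hε hc hgc hgb (k+1)
    simpa [show ((k:ℤ)+1+1) = (k+2 : ℤ) by ring] using this
  have hint2 : IntegrableOn (fun t : ℝ => ((ε:ℂ) - I * t) ^ (-(k+1) : ℤ) * G t) (Ioi 0) :=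
    integrable_b_mul hε hc hGc hGb k
  have hint : IntegrableOn (fun t : ℝ =>
      c₂ * (((ε:ℂ) - I * t) ^ (-(k+2) : ℤ) * g t)
        + ((ε:ℂ) - I * t) ^ (-(k+1) : ℤ) * G t) (Ioi 0) :=
    (hint1.const_mul c₂).add hint2
  have htend : Tendsto (fun t : ℝ => ((ε:ℂ) - I * t) ^ (-(k+1) : ℤ) * g t) atTop (nhds 0) := by
    refine squeeze_zero_norm' (a := fun t => (ε ^ (k+1))⁻¹ * (C * Real.exp (-c * t))) ?_ ?_
    · filter_upwards [eventually_ge_atTop (0:ℝ)] with t ht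
      rw [norm_mul]
      exact mul_le_mul (norm_zpow_le hε k (eps_le_norm_sub t)) (hgb t ht)
        (norm_nonneg _) (by positivity)
    · simpa [mul_assoc] using exp_decay_tendsto hc ((ε ^ (k+1))⁻¹ * C)
  have key := integral_Ioi_of_hasDerivAt_of_tendsto' (fun t _ => hF t) hint htend
  rw [integral_add (hint1.const_mul c₂) hint2, integral_const_mul] at key
  have h0 : ((ε:ℂ) - I * (0:ℝ)) ^ (-(k+1) : ℤ) = (ε:ℂ) ^ (-(k+1) : ℤ) := by norm_num
  rw [h0] at key
  have hne : ((k:ℂ)+1) * I ≠ 0 :=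
    mul_ne_zero (Nat.cast_add_one_ne_zero k) I_ne_zero
  rw [hc₂] at key ⊢
  field_simp at key ⊢
  linear_combination key
lemma split_int {ε c C : ℝ} (hε : 0 < ε) (hc : 0 < c) {h : ℝ → ℂ}
    (hhc : Continuous h) (hhb : ∀ t, 0 ≤ t → ‖h t‖ ≤ C * Real.exp (-c * t))
    (k : ℕ) (s : ℂ) :
    ∫ t in Ioi (0:ℝ), (((ε:ℂ)+I*t)^(-(k+1):ℤ) + s * ((ε:ℂ)-I*t)^(-(k+1):ℤ)) * h t
      = (∫ t in Ioi (0:ℝ), ((ε:ℂ)+I*t)^(-(k+1):ℤ) * h t)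
        + s * ∫ t in Ioi (0:ℝ), ((ε:ℂ)-I*t)^(-(k+1):ℤ) * h t := by
  simp only [add_mul, mul_assoc]
  rw [integral_add (integrable_a_mul hε hc hhc hhb k)
    ((integrable_b_mul hε hc hhc hhb k).const_mul s), integral_const_mul]

lemma iterate_steps {ε c C : ℝ} (hε : 0 < ε) (hc : 0 < c) {n : ℕ} {g : ℕ → ℝ → ℂ}
    (hDeriv : ∀ j, j < n → ∀ t, HasDerivAt (g j) (g (j+1) t) t)
    (hCont : ∀ j, j ≤ n → Continuous (g j))
    (hb : ∀ j, j ≤ n → ∀ t : ℝ, 0 ≤ t → ‖g j t‖ ≤ C * Real.exp (-c * t))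
    (hodd : ∀ j, Odd j → j < n → g j 0 = 0) :
    ∀ k, k ≤ n →
      (∫ t in Ioi (0:ℝ), (((ε:ℂ)+I*t)^(-(k+1):ℤ)
          + (-1:ℂ)^(n-k) * ((ε:ℂ)-I*t)^(-(k+1):ℤ)) * g (n-k) t)
        = ((Nat.factorial k : ℂ) * I^k)⁻¹ *
          ∫ t in Ioi (0:ℝ), (((ε:ℂ)+I*t)^(-(0+1):ℤ)
            + (-1:ℂ)^(n-0) * ((ε:ℂ)-I*t)^(-(0+1):ℤ)) * g (n-0) t := by
  intro k
  induction k with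
  | zero => intro _; norm_num
  | succ k ih =>
    intro hk1
    have hkn : k ≤ n := le_of_lt hk1
    set j := n - (k+1) with hjdef
    have hjn : j < n := by omega
    have hj1 : n - k = j + 1 := by omega
    have hj1n : j + 1 ≤ n := by omega
    -- split LHS at level k+1
    have hsplitL := split_int hε hc (hCont j (le_of_lt hjn)) (hb j (le_of_lt hjn))
      (k+1) ((-1:ℂ)^j)
    simp only [Nat.cast_add, Nat.cast_one,
      show -((k:ℤ)+1+1) = -((k:ℤ)+2) from by ring] at hsplitL
    -- split at level k
    have hsplitR := split_int hε hc (hCont (j+1) hj1n) (hb (j+1) hj1n) k ((-1:ℂ)^(j+1))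
    -- rewrite induction hypothesis
    have ih' := ih hkn
    rw [hj1] at ih'
    rw [hsplitR] at ih'
    -- the step
    have hsa := step_a hε hc (hDeriv j hjn) (hCont j (le_of_lt hjn)) (hCont (j+1) hj1n)
      (hb j (le_of_lt hjn)) (hb (j+1) hj1n) k
    have hsb := step_b hε hc (hDeriv j hjn) (hCont j (le_of_lt hjn)) (hCont (j+1) hj1n)
      (hb j (le_of_lt hjn)) (hb (j+1) hj1n) k
    have hz : (1 - (-1:ℂ)^j) * ((ε:ℂ) ^ (-(k+1) : ℤ) * g j 0) = 0 := by
      rcases Nat.even_or_odd j with he | ho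
      · rw [he.neg_one_pow]; ring
      · rw [hodd j ho hjn]; ring
    have hstep : (∫ t in Ioi (0:ℝ), (((ε:ℂ)+I*t)^(-((k:ℤ)+1+1))
          + (-1:ℂ)^(n-(k+1)) * ((ε:ℂ)-I*t)^(-((k:ℤ)+1+1))) * g (n-(k+1)) t)
        = (((k:ℂ)+1)*I)⁻¹ *
          ((∫ t in Ioi (0:ℝ), ((ε:ℂ)+I*t)^(-(k+1):ℤ) * g (j+1) t)
            + (-1:ℂ)^(j+1) * ∫ t in Ioi (0:ℝ), ((ε:ℂ)-I*t)^(-(k+1):ℤ) * g (j+1) t) := by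
      rw [show n - (k+1) = j from rfl]
      rw [show -((k:ℤ)+1+1) = -((k:ℤ)+2) from by ring]
      rw [hsplitL, hsa, hsb, pow_succ]
      linear_combination (((k:ℂ)+1)*I)⁻¹ * hz
    have hgoal : (∫ t in Ioi (0:ℝ), (((ε:ℂ)+I*t)^(-((k+1:ℕ)+1):ℤ)
          + (-1:ℂ)^(n-(k+1)) * ((ε:ℂ)-I*t)^(-((k+1:ℕ)+1):ℤ)) * g (n-(k+1)) t)
        = (((k:ℂ)+1)*I)⁻¹ * (((Nat.factorial k : ℂ) * I^k)⁻¹ *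
          ∫ t in Ioi (0:ℝ), (((ε:ℂ)+I*t)^(-(0+1):ℤ)
            + (-1:ℂ)^(n-0) * ((ε:ℂ)-I*t)^(-(0+1):ℤ)) * g (n-0) t) := by
      rw [← ih']
      rw [show ((-((k+1:ℕ)+1)) : ℤ) = -((k:ℤ)+1+1) from by push_cast; ring]
      exact hstep
    rw [hgoal]
    rw [show ((Nat.factorial (k+1) : ℂ)) = ((k:ℂ)+1) * (Nat.factorial k : ℂ) from by
      rw [Nat.factorial_succ]; push_cast; ring, pow_succ]
    simp only [mul_inv]
    ring
lemma poisson_limit {c C : ℝ} (hc : 0 < c) {G : ℝ → ℂ} (hGc : Continuous G)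
    (hGb : ∀ t : ℝ, 0 ≤ t → ‖G t‖ ≤ C * Real.exp (-c * t)) :
    Tendsto (fun ε : ℝ => ∫ t in Ioi (0:ℝ), ((ε / (ε^2 + t^2) : ℝ) : ℂ) * G t)
      (nhdsWithin 0 (Ioi 0)) (nhds (((Real.pi/2 : ℝ) : ℂ) * G 0)) := by
  -- substituted form
  have hsub : ∀ ε ∈ Ioi (0:ℝ),
      (∫ t in Ioi (0:ℝ), ((ε / (ε^2 + t^2) : ℝ) : ℂ) * G t)
        = ∫ s in Ioi (0:ℝ), (((1+s^2)⁻¹ : ℝ) : ℂ) * G (ε*s) := by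
    intro ε hε
    rw [Set.mem_Ioi] at hε
    have h1 := integral_comp_mul_left_Ioi
      (fun t : ℝ => ((ε / (ε^2 + t^2) : ℝ) : ℂ) * G t) 0 hε
    rw [mul_zero] at h1
    have h2 : (∫ t in Ioi (0:ℝ), ((ε / (ε^2 + t^2) : ℝ) : ℂ) * G t)
        = ε • ∫ s in Ioi (0:ℝ), ((ε / (ε^2 + (ε*s)^2) : ℝ) : ℂ) * G (ε*s) := by
      rw [h1, smul_smul, mul_inv_cancel₀ hε.ne', one_smul]
    rw [h2, ← integral_smul]
    congr 1
    funext s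
    rw [Complex.real_smul, ← mul_assoc, ← Complex.ofReal_mul]
    congr 2
    have hden : ε^2 + (ε*s)^2 = ε^2 * (1+s^2) := by ring
    rw [hden]
    field_simp
  have hDCT : Tendsto (fun ε : ℝ => ∫ s in Ioi (0:ℝ), (((1+s^2)⁻¹ : ℝ) : ℂ) * G (ε*s))
      (nhdsWithin 0 (Ioi 0)) (nhds (∫ s in Ioi (0:ℝ), (((1+s^2)⁻¹ : ℝ) : ℂ) * G 0)) := by
    apply tendsto_integral_filter_of_dominated_convergence (bound := fun s => (1+s^2)⁻¹ * C)
    · filter_upwards with ε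
      have hcont1 : Continuous (fun a : ℝ => (1+a^2)⁻¹) :=
        (continuous_const.add (continuous_pow 2)).inv₀ (fun x => by have hx : (0:ℝ) < 1 + x^2 := (by positivity); exact hx.ne')
      exact ((Complex.continuous_ofReal.comp hcont1).mul
        (hGc.comp (continuous_const.mul continuous_id))).aestronglyMeasurable
    · filter_upwards [self_mem_nhdsWithin] with ε hε
      rw [Set.mem_Ioi] at hε
      filter_upwards [ae_restrict_mem measurableSet_Ioi] with s hs
      rw [Set.mem_Ioi] at hs
      rw [norm_mul, Complex.norm_real, Real.norm_eq_abs,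
        _root_.abs_of_nonneg (by positivity : (0:ℝ) ≤ (1+s^2)⁻¹)]
      have h3 : ‖G (ε*s)‖ ≤ C := by
        refine le_trans (hGb (ε*s) (by positivity)) ?_
        have : Real.exp (-c * (ε*s)) ≤ 1 := by
          rw [Real.exp_le_one_iff]
          have : 0 ≤ c * (ε * s) := by positivity
          linarith
        nlinarith [le_trans (norm_nonneg (G (ε*s))) (hGb (ε*s) (by positivity)),
          Real.exp_pos (-c * (ε*s))]
      exact mul_le_mul_of_nonneg_left h3 (by positivity)
    · exact (integrable_inv_one_add_sq.mul_const C).integrableOn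
    · filter_upwards with s
      have h4 : Tendsto (fun ε : ℝ => ε * s) (nhdsWithin 0 (Ioi 0)) (nhds 0) := by
        have h5 : Tendsto (fun ε : ℝ => ε * s) (nhds 0) (nhds 0) := by
          have := (continuous_id.mul (continuous_const (y := s))).tendsto 0
          simpa using (continuous_mul_right s).tendsto 0
        exact h5.mono_left nhdsWithin_le_nhds
      exact ((hGc.tendsto 0).comp h4).const_mul _
  have hval : (∫ s in Ioi (0:ℝ), (((1+s^2)⁻¹ : ℝ) : ℂ) * G 0)
      = ((Real.pi/2 : ℝ) : ℂ) * G 0 := by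
    rw [integral_mul_const]
    congr 1
    have hreal : (∫ s in Ioi (0:ℝ), (1+s^2)⁻¹) = Real.pi/2 := by
      simpa using integral_Ioi_inv_one_add_sq (i := 0)
    calc (∫ s in Ioi (0:ℝ), (((1+s^2)⁻¹ : ℝ) : ℂ))
        = ∫ s in Ioi (0:ℝ), ((1+s^2)⁻¹ : ℝ) • (1:ℂ) := by
          congr 1; funext s; rw [Complex.real_smul, mul_one]
      _ = (∫ s in Ioi (0:ℝ), ((1+s^2)⁻¹ : ℝ)) • (1:ℂ) := integral_smul_const _ _
      _ = ((Real.pi/2 : ℝ) : ℂ) := by rw [hreal, Complex.real_smul, mul_one]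
  rw [hval] at hDCT
  refine hDCT.congr' ?_
  filter_upwards [self_mem_nhdsWithin] with ε hε
  exact (hsub ε hε).symm

/-- Let `n = 2m` and let `u : ℝ → ℂ` be `n`-times continuously
differentiable with all derivatives of order `≤ n` exponentially decaying on `[0,∞)`,
and with `u^{(k)}(0) = 0` for every odd `k < n`. Then
`lim_{ε↓0} ∫_0^∞ K_n^ε(t) u(t) dt = ((-1)^m/2) u^{(n)}(0)`. -/
theorem stmt_12 (m : ℕ) (u : ℝ → ℂ) (hu : ContDiff ℝ (2 * m : ℕ) u)
    (C c : ℝ) (hC : 0 < C) (hc : 0 < c)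
    (hbound : ∀ k ≤ 2 * m, ∀ t : ℝ, 0 ≤ t →
      ‖iteratedDeriv k u t‖ ≤ C * Real.exp (-c * t))
    (hodd : ∀ k, Odd k → k < 2 * m → iteratedDeriv k u 0 = 0) :
    Filter.Tendsto
      (fun ε : ℝ => ∫ t in Set.Ioi (0 : ℝ), K ((2 * m : ℕ) : ℂ) ε t * u t)
      (nhdsWithin 0 (Set.Ioi 0))
      (nhds (((-1 : ℂ) ^ m / 2) * iteratedDeriv (2 * m) u 0)) := by
  have hπ : (0:ℝ) < Real.pi := Real.pi_pos
  have hπc : ((Real.pi : ℝ) : ℂ) ≠ 0 := Complex.ofReal_ne_zero.mpr hπ.ne'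
  set n := 2 * m with hn
  have hCont : ∀ j, j ≤ n → Continuous (iteratedDeriv j u) := fun j hj =>
    hu.continuous_iteratedDeriv j (by exact_mod_cast hj)
  have hDeriv : ∀ j, j < n → ∀ t, HasDerivAt (iteratedDeriv j u) (iteratedDeriv (j+1) u t) t := by
    intro j hj t
    have h1 := (hu.differentiable_iteratedDeriv j (by exact_mod_cast hj)) t
    rw [iteratedDeriv_succ]
    exact h1.hasDerivAt
  -- key identity for fixed ε > 0
  have key : ∀ ε ∈ Set.Ioi (0:ℝ),
      (∫ t in Set.Ioi (0 : ℝ), K ((n:ℕ) : ℂ) ε t * u t)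
        = ((-1:ℂ)^m / (Real.pi : ℂ)) *
            ∫ t in Set.Ioi (0:ℝ), ((ε / (ε^2 + t^2) : ℝ) : ℂ) * iteratedDeriv n u t := by
    intro ε hε
    rw [Set.mem_Ioi] at hε
    -- rewrite K in zpow form
    have hK : ∀ t : ℝ, K ((n:ℕ) : ℂ) ε t * u t
        = ((Nat.factorial n : ℂ) / (2 * (Real.pi:ℂ))) *
          (((((ε:ℂ)) + I*t)^(-(n+1):ℤ)
            + (-1:ℂ)^(n-n) * (((ε:ℂ)) - I*t)^(-(n+1):ℤ)) * iteratedDeriv (n-n) u t) := by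
      intro t
      rw [K]
      rw [show (1 + ((n:ℕ):ℂ)) = ((n:ℕ):ℂ) + 1 from by ring, Complex.Gamma_nat_eq_factorial]
      rw [show (-(((n:ℕ):ℂ) + 1)) = ((-(n+1) : ℤ) : ℂ) from by push_cast; ring]
      rw [Complex.cpow_intCast, Complex.cpow_intCast]
      simp only [Nat.sub_self, pow_zero, one_mul, iteratedDeriv_zero]
      ring
    have hiter := iterate_steps hε hc (n := n) (g := fun j => iteratedDeriv j u)
      hDeriv hCont (fun j hj => hbound j hj) (fun j hjo hjn => hodd j hjo hjn) n le_rfl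
    calc (∫ t in Set.Ioi (0 : ℝ), K ((n:ℕ) : ℂ) ε t * u t)
        = ((Nat.factorial n : ℂ) / (2 * (Real.pi:ℂ))) *
          ∫ t in Set.Ioi (0:ℝ),
            ((((ε:ℂ)) + I*t)^(-(n+1):ℤ)
              + (-1:ℂ)^(n-n) * (((ε:ℂ)) - I*t)^(-(n+1):ℤ)) * iteratedDeriv (n-n) u t := by
          rw [← integral_const_mul]
          exact setIntegral_congr_fun measurableSet_Ioi (fun t _ => hK t)
      _ = ((Nat.factorial n : ℂ) / (2 * (Real.pi:ℂ))) *
          (((Nat.factorial n : ℂ) * I^n)⁻¹ *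
            ∫ t in Set.Ioi (0:ℝ),
              ((((ε:ℂ)) + I*t)^(-(0+1):ℤ)
                + (-1:ℂ)^(n-0) * (((ε:ℂ)) - I*t)^(-(0+1):ℤ)) * iteratedDeriv (n-0) u t) := by
          rw [hiter]
      _ = ((-1:ℂ)^m / (Real.pi : ℂ)) *
            ∫ t in Set.Ioi (0:ℝ), ((ε / (ε^2 + t^2) : ℝ) : ℂ) * iteratedDeriv n u t := by
          have hptwise : ∀ t ∈ Set.Ioi (0:ℝ),
              ((((ε:ℂ)) + I*t)^(-(0+1):ℤ)
                + (-1:ℂ)^(n-0) * (((ε:ℂ)) - I*t)^(-(0+1):ℤ)) * iteratedDeriv (n-0) u t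
              = (2:ℂ) * (((ε / (ε^2 + t^2) : ℝ) : ℂ) * iteratedDeriv n u t) := by
            intro t _
            have hne1 : (ε:ℂ) + I*t ≠ 0 := by
              intro h; have := congrArg Complex.re h; simp at this; exact hε.ne' this
            have hne2 : (ε:ℂ) - I*t ≠ 0 := by
              intro h; have := congrArg Complex.re h; simp at this; exact hε.ne' this
            have hden : (0:ℝ) < ε^2 + t^2 := by positivity
            have hdenc : ((ε^2 + t^2 : ℝ) : ℂ) ≠ 0 := Complex.ofReal_ne_zero.mpr hden.ne'
            have hnev : (-1:ℂ)^n = 1 := (Even.neg_one_pow ⟨m, by omega⟩)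
            rw [Nat.sub_zero, hnev, one_mul]
            have hsum : ((ε:ℂ) + I*t)^(-(0+1):ℤ) + ((ε:ℂ) - I*t)^(-(0+1):ℤ)
                = (2:ℂ) * ((ε / (ε^2 + t^2) : ℝ) : ℂ) := by
              rw [show (-(0+1) : ℤ) = -1 from by ring, zpow_neg_one, zpow_neg_one]
              have hABprod : ((ε:ℂ) + I*t) * ((ε:ℂ) - I*t) = ((ε^2+t^2 : ℝ) : ℂ) := by
                push_cast
                linear_combination (-(t:ℂ)^2) * Complex.I_sq
              rw [inv_add_inv hne1 hne2, hABprod,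
                show ((ε:ℂ) + I*t) + ((ε:ℂ) - I*t) = 2*(ε:ℂ) from by ring,
                Complex.ofReal_div]
              rw [mul_div_assoc]
            rw [hsum]
            ring
          rw [setIntegral_congr_fun measurableSet_Ioi hptwise, integral_const_mul]
          have hIn : (I:ℂ)^n = (-1:ℂ)^m := by rw [hn, pow_mul, Complex.I_sq]
          rw [hIn]
          have hfne : ((Nat.factorial n : ℂ)) ≠ 0 :=
            Nat.cast_ne_zero.mpr (Nat.factorial_ne_zero n)
          have hm1 : ((-1:ℂ)^m)⁻¹ = (-1:ℂ)^m := by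
            rw [← inv_pow, inv_neg, inv_one]
          rw [mul_inv, hm1]
          field_simp
  -- the limit
  have hlim := poisson_limit hc (hCont n le_rfl) (hbound n le_rfl)
  have hfinal := hlim.const_mul ((-1:ℂ)^m / (Real.pi : ℂ))
  have hval : ((-1:ℂ)^m / (Real.pi : ℂ)) * (((Real.pi/2 : ℝ) : ℂ) * iteratedDeriv n u 0)
      = ((-1 : ℂ) ^ m / 2) * iteratedDeriv n u 0 := by
    push_cast
    field_simp
  rw [hval] at hfinal
  refine hfinal.congr' ?_
  filter_upwards [self_mem_nhdsWithin] with ε hε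
  exact (key ε hε).symm

end Aux
end

section
/- Let m ∈ ℕ and set n = 2m+1. Let u : ℝ → ℂ be (n+1)-times continuously differentiable and suppose there are constants C, c > 0 such that ‖u^{(k)}(t)‖ ≤ C·e^{−c t} for all t ≥ 0 and all 0 ≤ k ≤ n+1, and that u^{(k)}(0) = 0 for every odd k with k ≤ n. Then lim_{ε↓0} ∫_0^∞ K_n^ε(t) · u(t) dt = ((−1)^{m+1} / π) · ∫_0^∞ u^{(n)}(t) · t^{−1} dt, the integral on the right being absolutely convergent. -/
open MeasureTheory Complex Filter Set

namespace Stmt13Aux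

lemma sigma_re {σ : ℂ} (hσ : σ = I ∨ σ = -I) : σ.re = 0 := by
  rcases hσ with rfl | rfl <;> simp
lemma sigma_ne {σ : ℂ} (hσ : σ = I ∨ σ = -I) : σ ≠ 0 := by
  rcases hσ with rfl | rfl <;> simp [I_ne_zero]
lemma z_re (ε : ℝ) {σ : ℂ} (hσre : σ.re = 0) (t : ℝ) : ((ε:ℂ) + σ * (t:ℂ)).re = ε := by
  simp [Complex.add_re, Complex.mul_re, hσre]
lemma z_ne {ε : ℝ} (hε : 0 < ε) {σ : ℂ} (hσre : σ.re = 0) (t : ℝ) :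
    (ε : ℂ) + σ * (t:ℂ) ≠ 0 := by
  intro h
  have h2 := z_re ε hσre t
  rw [h] at h2
  simp at h2
  exact absurd h2.symm (ne_of_gt hε)
lemma z_norm_ge {ε : ℝ} (hε : 0 < ε) {σ : ℂ} (hσre : σ.re = 0) (t : ℝ) :
    ε ≤ ‖(ε:ℂ) + σ * (t:ℂ)‖ := by
  have h := Complex.abs_re_le_norm ((ε:ℂ) + σ * (t:ℂ))
  rw [z_re ε hσre t, abs_of_pos hε] at h
  exact h
lemma norm_zpow_neg_le {ε : ℝ} (hε : 0 < ε) {z : ℂ} (hz : ε ≤ ‖z‖) (k : ℕ) :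
    ‖z ^ (-(k:ℤ))‖ ≤ (ε ^ k)⁻¹ := by
  rw [norm_zpow, zpow_neg, zpow_natCast]
  exact inv_anti₀ (pow_pos hε k) (pow_le_pow_left₀ hε.le hz k)
lemma integrable_ker_mul {ε c Cv : ℝ} (hε : 0 < ε) (hc : 0 < c) {σ : ℂ}
    (hσ : σ = I ∨ σ = -I) (k : ℕ) {v : ℝ → ℂ} (hv : Continuous v)
    (hbv : ∀ t, 0 ≤ t → ‖v t‖ ≤ Cv * Real.exp (-c * t)) :
    IntegrableOn (fun t : ℝ => ((ε:ℂ) + σ * (t:ℂ)) ^ (-(k:ℤ)) * v t) (Ioi 0) := by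
  have hσre := sigma_re hσ
  have hz := fun t => z_ne hε hσre t
  have hker : Continuous fun t : ℝ => ((ε:ℂ) + σ * (t:ℂ)) ^ (-(k:ℤ)) :=
    Continuous.zpow₀ (by continuity) _ fun t => Or.inl (hz t)
  refine (((exp_neg_integrableOn_Ioi 0 hc).const_mul ((ε ^ k)⁻¹ * Cv)).mono'
    ((hker.mul hv).aestronglyMeasurable.restrict) ?_)
  filter_upwards [ae_restrict_mem measurableSet_Ioi] with t ht
  rw [norm_mul]
  have h1 : ‖((ε:ℂ) + σ * (t:ℂ)) ^ (-(k:ℤ))‖ ≤ (ε ^ k)⁻¹ :=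
    norm_zpow_neg_le hε (z_norm_ge hε hσre t) k
  have h2 := hbv t (le_of_lt ht)
  calc ‖((ε:ℂ) + σ * (t:ℂ)) ^ (-(k:ℤ))‖ * ‖v t‖
      ≤ (ε^k)⁻¹ * (Cv * Real.exp (-c*t)) :=
        mul_le_mul h1 h2 (norm_nonneg _) (by positivity)
    _ = (ε^k)⁻¹ * Cv * Real.exp (-c*t) := by ring

lemma ibp_step {ε c Cv : ℝ} (hε : 0 < ε) (hc : 0 < c) {σ : ℂ} (hσ : σ = I ∨ σ = -I)
    {k : ℕ} (hk : 1 ≤ k) {v w : ℝ → ℂ} (hv : ∀ t, HasDerivAt v (w t) t)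
    (hw : Continuous w)
    (hbv : ∀ t, 0 ≤ t → ‖v t‖ ≤ Cv * Real.exp (-c * t))
    (hbw : ∀ t, 0 ≤ t → ‖w t‖ ≤ Cv * Real.exp (-c * t)) :
    ∫ t in Ioi (0:ℝ), ((ε:ℂ) + σ * (t:ℂ)) ^ (-((k+1:ℕ):ℤ)) * v t
      = (1 / (k * σ)) * (ε:ℂ) ^ (-(k:ℤ)) * v 0
        + (1 / (k * σ)) * ∫ t in Ioi (0:ℝ), ((ε:ℂ) + σ * (t:ℂ)) ^ (-(k:ℤ)) * w t := by
  have hσre := sigma_re hσ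
  have hσne := sigma_ne hσ
  have hz := fun t : ℝ => z_ne hε hσre t
  have hkσ : (k:ℂ) * σ ≠ 0 := mul_ne_zero (Nat.cast_ne_zero.mpr (by omega)) hσne
  have hvc : Continuous v := by
    rw [continuous_iff_continuousAt]; exact fun t => (hv t).continuousAt
  -- F t = (-(1)/(kσ)) * z(t)^{-k}
  set F : ℝ → ℂ := fun t => (-(1:ℂ) / ((k:ℂ) * σ)) * ((ε:ℂ) + σ * (t:ℂ)) ^ (-(k:ℤ)) with hF_def
  have hexp : (-(k:ℤ) - 1) = -((k+1:ℕ):ℤ) := by push_cast; ring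
  have hF : ∀ t : ℝ, HasDerivAt F (((ε:ℂ) + σ * (t:ℂ)) ^ (-((k+1:ℕ):ℤ))) t := by
    intro t
    have hg : HasDerivAt (fun z : ℂ => (ε:ℂ) + σ * z) σ ((t:ℝ):ℂ) := by
      simpa using ((hasDerivAt_id ((t:ℝ):ℂ)).const_mul σ).const_add (ε:ℂ)
    have h1 : HasDerivAt (fun z : ℂ => ((ε:ℂ) + σ * z) ^ (-(k:ℤ)))
        ((-(k:ℤ)) * ((ε:ℂ) + σ * (t:ℂ)) ^ (-(k:ℤ) - 1) * σ) ((t:ℝ):ℂ) := by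
      simpa [Function.comp_def] using (hasDerivAt_zpow (-(k:ℤ)) _ (Or.inl (hz t))).comp ((t:ℝ):ℂ) hg
    have h2 := ((h1.const_mul (-(1:ℂ) / ((k:ℂ) * σ))).comp_ofReal)
    convert h2 using 1
    rw [hexp.symm]
    field_simp
    rw [mul_div_assoc, Int.cast_natCast, div_self (a := (k:ℂ)) (Nat.cast_ne_zero.mpr (by omega)), mul_one]
  have hG : ∀ t : ℝ, HasDerivAt (fun t => F t * v t)
      (((ε:ℂ) + σ * (t:ℂ)) ^ (-((k+1:ℕ):ℤ)) * v t + F t * w t) t :=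
    fun t => (hF t).mul (hv t)
  have hiv : IntegrableOn (fun t : ℝ => ((ε:ℂ) + σ * (t:ℂ)) ^ (-((k+1:ℕ):ℤ)) * v t) (Ioi 0) :=
    integrable_ker_mul hε hc hσ (k+1) hvc hbv
  have hiw : IntegrableOn (fun t : ℝ => ((ε:ℂ) + σ * (t:ℂ)) ^ (-(k:ℤ)) * w t) (Ioi 0) :=
    integrable_ker_mul hε hc hσ k hw hbw
  have hiFw : IntegrableOn (fun t : ℝ => F t * w t) (Ioi 0) := by
    have h := hiw.const_mul (-(1:ℂ) / ((k:ℂ) * σ))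
    exact IntegrableOn.congr_fun h (fun t _ => by rw [hF_def]; ring) measurableSet_Ioi
  have htend : Tendsto (fun t => F t * v t) atTop (nhds 0) := by
    apply squeeze_zero_norm'
      (a := fun t => (‖(-(1:ℂ) / ((k:ℂ) * σ))‖ * (ε ^ k)⁻¹) * (Cv * Real.exp (-c * t)))
    · filter_upwards [eventually_ge_atTop (0:ℝ)] with t ht
      rw [norm_mul, hF_def, norm_mul]
      exact mul_le_mul (mul_le_mul le_rfl (norm_zpow_neg_le hε (z_norm_ge hε hσre t) k)
        (norm_nonneg _) (norm_nonneg _)) (hbv t ht) (norm_nonneg _) (by positivity)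
    · have h1 : Tendsto (fun t : ℝ => c * t) atTop atTop :=
        Tendsto.const_mul_atTop hc tendsto_id
      have h0 : Tendsto (fun t : ℝ => Real.exp (-c * t)) atTop (nhds 0) := by
        have h2 := Real.tendsto_exp_neg_atTop_nhds_zero.comp h1
        simpa [Function.comp_def, neg_mul] using h2
      simpa using ((h0.const_mul Cv).const_mul (‖(-(1:ℂ) / ((k:ℂ) * σ))‖ * (ε ^ k)⁻¹))
  have hFcont : Continuous F := by
    rw [continuous_iff_continuousAt]; exact fun t => (hF t).continuousAt
  have hFTC := integral_Ioi_of_hasDerivAt_of_tendsto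
    ((hFcont.mul hvc).continuousWithinAt) (fun x _ => hG x) (hiv.add hiFw) htend
  have hIFw : ∫ t in Ioi (0:ℝ), F t * w t
      = (-(1:ℂ)/((k:ℂ)*σ)) * ∫ t in Ioi (0:ℝ), ((ε:ℂ) + σ * (t:ℂ)) ^ (-(k:ℤ)) * w t := by
    rw [← integral_const_mul]
    apply setIntegral_congr_fun measurableSet_Ioi
    intro t _
    rw [hF_def]; ring
  have hF0 : F 0 = -(1:ℂ)/((k:ℂ)*σ) * (ε:ℂ)^(-(k:ℤ)) := by
    simp [hF_def]
  have hadd := integral_add hiv hiFw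
  calc ∫ t in Ioi (0:ℝ), ((ε:ℂ) + σ * (t:ℂ)) ^ (-((k+1:ℕ):ℤ)) * v t
      = (0 - F 0 * v 0) - ∫ t in Ioi (0:ℝ), F t * w t := by
        rw [← Pi.mul_apply F v 0, ← hFTC, hadd]; ring
    _ = (1 / (k * σ)) * (ε:ℂ) ^ (-(k:ℤ)) * v 0
        + (1 / (k * σ)) * ∫ t in Ioi (0:ℝ), ((ε:ℂ) + σ * (t:ℂ)) ^ (-(k:ℤ)) * w t := by
        rw [hF0, hIFw]; ring

lemma double_step {ε c Cv : ℝ} (hε : 0 < ε) (hc : 0 < c)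
    {k : ℕ} (hk : 1 ≤ k) {v w : ℝ → ℂ} (hv : ∀ t, HasDerivAt v (w t) t)
    (hw : Continuous w)
    (hbv : ∀ t, 0 ≤ t → ‖v t‖ ≤ Cv * Real.exp (-c * t))
    (hbw : ∀ t, 0 ≤ t → ‖w t‖ ≤ Cv * Real.exp (-c * t)) (a b : ℂ) :
    ∫ t in Ioi (0:ℝ),
        (a * ((ε:ℂ) + I * (t:ℂ)) ^ (-((k+1:ℕ):ℤ))
          + b * ((ε:ℂ) + (-I) * (t:ℂ)) ^ (-((k+1:ℕ):ℤ))) * v t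
      = ((a * (-I) + b * I) / (k:ℂ)) * (ε:ℂ) ^ (-(k:ℤ)) * v 0
        + (1/(k:ℂ)) * ∫ t in Ioi (0:ℝ),
            ((a * (-I)) * ((ε:ℂ) + I * (t:ℂ)) ^ (-(k:ℤ))
              + (b * I) * ((ε:ℂ) + (-I) * (t:ℂ)) ^ (-(k:ℤ))) * w t := by
  have hvc : Continuous v := by
    rw [continuous_iff_continuousAt]; exact fun t => (hv t).continuousAt
  have hiPv := integrable_ker_mul hε hc (Or.inl rfl) (k+1) hvc hbv
  have hiMv := integrable_ker_mul hε hc (Or.inr rfl) (k+1) hvc hbv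
  have hiPw := integrable_ker_mul hε hc (Or.inl rfl) k hw hbw
  have hiMw := integrable_ker_mul hε hc (Or.inr rfl) k hw hbw
  have hP := ibp_step hε hc (Or.inl rfl) hk hv hw hbv hbw
  have hM := ibp_step hε hc (Or.inr rfl) hk hv hw hbv hbw
  have hk0 : (k:ℂ) ≠ 0 := Nat.cast_ne_zero.mpr (by omega)
  have hsplitL : (∫ t in Ioi (0:ℝ),
        (a * ((ε:ℂ) + I * (t:ℂ)) ^ (-((k+1:ℕ):ℤ))
          + b * ((ε:ℂ) + (-I) * (t:ℂ)) ^ (-((k+1:ℕ):ℤ))) * v t)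
      = a * (∫ t in Ioi (0:ℝ), ((ε:ℂ) + I * (t:ℂ)) ^ (-((k+1:ℕ):ℤ)) * v t)
        + b * (∫ t in Ioi (0:ℝ), ((ε:ℂ) + (-I) * (t:ℂ)) ^ (-((k+1:ℕ):ℤ)) * v t) := by
    rw [← integral_const_mul, ← integral_const_mul,
      ← integral_add (hiPv.const_mul a) (hiMv.const_mul b)]
    apply setIntegral_congr_fun measurableSet_Ioi
    intro t _; ring
  have hsplitR : (∫ t in Ioi (0:ℝ),
        ((a * (-I)) * ((ε:ℂ) + I * (t:ℂ)) ^ (-(k:ℤ))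
          + (b * I) * ((ε:ℂ) + (-I) * (t:ℂ)) ^ (-(k:ℤ))) * w t)
      = (a * (-I)) * (∫ t in Ioi (0:ℝ), ((ε:ℂ) + I * (t:ℂ)) ^ (-(k:ℤ)) * w t)
        + (b * I) * (∫ t in Ioi (0:ℝ), ((ε:ℂ) + (-I) * (t:ℂ)) ^ (-(k:ℤ)) * w t) := by
    rw [← integral_const_mul, ← integral_const_mul,
      ← integral_add (hiPw.const_mul _) (hiMw.const_mul _)]
    apply setIntegral_congr_fun measurableSet_Ioi
    intro t _; ring
  have hIinv : (1:ℂ)/((k:ℂ)*I) = (-I)/(k:ℂ) := by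
    rw [one_div, mul_inv, Complex.inv_I]; ring
  have hIinv2 : (1:ℂ)/((k:ℂ)*(-I)) = I/(k:ℂ) := by
    rw [one_div, mul_inv, inv_neg, Complex.inv_I]; ring
  rw [hsplitL, hsplitR, hP, hM, hIinv, hIinv2]
  ring

end Stmt13Aux

open Stmt13Aux

/-- Let `n = 2m+1` and let `u : ℝ → ℂ` be `(n+1)`-times continuously
differentiable with all derivatives of order `≤ n+1` exponentially decaying on `[0,∞)`,
and with `u^{(k)}(0) = 0` for every odd `k ≤ n`. Then
`lim_{ε↓0} ∫_0^∞ K_n^ε(t) u(t) dt = ((-1)^{m+1}/π) ∫_0^∞ u^{(n)}(t) t^{-1} dt`,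
the integral on the right being absolutely convergent. -/
theorem stmt_13 (m : ℕ) (u : ℝ → ℂ) (hu : ContDiff ℝ (2 * m + 2 : ℕ) u)
    (C c : ℝ) (hC : 0 < C) (hc : 0 < c)
    (hbound : ∀ k ≤ 2 * m + 2, ∀ t : ℝ, 0 ≤ t →
      ‖iteratedDeriv k u t‖ ≤ C * Real.exp (-c * t))
    (hodd : ∀ k, Odd k → k ≤ 2 * m + 1 → iteratedDeriv k u 0 = 0) :
    IntegrableOn (fun t : ℝ => iteratedDeriv (2 * m + 1) u t * (t : ℂ)⁻¹)
      (Set.Ioi (0 : ℝ)) ∧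
    Filter.Tendsto
      (fun ε : ℝ => ∫ t in Set.Ioi (0 : ℝ), K ((2 * m + 1 : ℕ) : ℂ) ε t * u t)
      (nhdsWithin 0 (Set.Ioi 0))
      (nhds (((-1 : ℂ) ^ (m + 1) / (Real.pi : ℂ)) *
        ∫ t in Set.Ioi (0 : ℝ), iteratedDeriv (2 * m + 1) u t * (t : ℂ)⁻¹)) := by
  set n := 2 * m + 1 with hn
  have hπ : (0:ℝ) < Real.pi := Real.pi_pos
  have hcontj : ∀ j, j ≤ 2*m+2 → Continuous (iteratedDeriv j u) := fun j hj =>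
    hu.continuous_iteratedDeriv j (by exact_mod_cast hj)
  have hder : ∀ j, j < 2*m+2 → ∀ t, HasDerivAt (iteratedDeriv j u)
      (iteratedDeriv (j+1) u t) t := by
    intro j hj t
    rw [iteratedDeriv_succ]
    exact ((hu.differentiable_iteratedDeriv j (by exact_mod_cast hj)) t).hasDerivAt
  have hn0 : iteratedDeriv n u 0 = 0 := hodd n ⟨m, by omega⟩ le_rfl
  -- linear bound near 0
  have hlin : ∀ t : ℝ, 0 ≤ t → ‖iteratedDeriv n u t‖ ≤ C * t := by
    intro t ht
    have hFTC : (∫ y in (0:ℝ)..t, iteratedDeriv (n+1) u y)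
        = iteratedDeriv n u t - iteratedDeriv n u 0 := by
      apply intervalIntegral.integral_eq_sub_of_hasDerivAt
      · exact fun x _ => hder n (by omega) x
      · exact ((hcontj (n+1) (by omega))).intervalIntegrable 0 t
    have hb : ∀ x ∈ Set.uIoc (0:ℝ) t, ‖iteratedDeriv (n+1) u x‖ ≤ C := by
      intro x hx
      rw [Set.uIoc_of_le ht] at hx
      refine le_trans (hbound (n+1) (by omega) x (le_of_lt hx.1)) ?_
      have : Real.exp (-c * x) ≤ 1 := Real.exp_le_one_iff.mpr (by nlinarith [hx.1])
      nlinarith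
    have := intervalIntegral.norm_integral_le_of_norm_le_const hb
    rw [hFTC, hn0, sub_zero] at this
    simpa [_root_.abs_of_nonneg ht] using this
  -- uniform key bound
  have hkey : ∀ t : ℝ, 0 < t → ‖iteratedDeriv n u t‖
      ≤ (C * Real.exp c * Real.exp (-c * t)) * t := by
    intro t ht
    rcases le_or_gt t 1 with h1 | h1
    · refine le_trans (hlin t ht.le) ?_
      have he : (1:ℝ) ≤ Real.exp c * Real.exp (-c * t) := by
        rw [← Real.exp_add]
        apply Real.one_le_exp
        nlinarith
      nlinarith [mul_le_mul_of_nonneg_left he (mul_nonneg hC.le ht.le)]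
    · refine le_trans (hbound n (by omega) t ht.le) ?_
      have he1 : (1:ℝ) ≤ Real.exp c := Real.one_le_exp hc.le
      have he2 : (0:ℝ) < Real.exp (-c * t) := Real.exp_pos _
      have h3 : (1:ℝ) ≤ Real.exp c * t := by nlinarith
      nlinarith [mul_le_mul_of_nonneg_left h3 (mul_nonneg hC.le he2.le)]
  -- integrability of the limit integrand
  have hmeas : ∀ ε : ℝ, AEStronglyMeasurable
      (fun t : ℝ => iteratedDeriv n u t * ((t:ℂ)/(((ε^2 + t^2 : ℝ)):ℂ)))
      (volume.restrict (Set.Ioi 0)) := by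
    intro ε
    apply ContinuousOn.aestronglyMeasurable _ measurableSet_Ioi
    apply ContinuousOn.mul (hcontj n (by omega)).continuousOn
    apply ContinuousOn.div Complex.continuous_ofReal.continuousOn
    · exact (Complex.continuous_ofReal.comp (by continuity)).continuousOn
    · intro t ht
      have : (0:ℝ) < ε^2 + t^2 := by have := ht.out; positivity
      exact_mod_cast ne_of_gt this
  have hmeas0 : AEStronglyMeasurable
      (fun t : ℝ => iteratedDeriv n u t * (t:ℂ)⁻¹) (volume.restrict (Set.Ioi 0)) := by
    apply ContinuousOn.aestronglyMeasurable _ measurableSet_Ioi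
    apply ContinuousOn.mul (hcontj n (by omega)).continuousOn
    apply ContinuousOn.inv₀ Complex.continuous_ofReal.continuousOn
    intro t ht
    exact_mod_cast ne_of_gt ht.out
  have hDint : Integrable (fun t : ℝ => (C * Real.exp c) * Real.exp (-c * t))
      (volume.restrict (Set.Ioi 0)) :=
    (exp_neg_integrableOn_Ioi 0 hc).const_mul _
  have hbnd0 : ∀ t : ℝ, 0 < t → ‖iteratedDeriv n u t * (t:ℂ)⁻¹‖
      ≤ (C * Real.exp c) * Real.exp (-c * t) := by
    intro t ht
    rw [norm_mul, norm_inv, Complex.norm_real, Real.norm_eq_abs, _root_.abs_of_pos ht]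
    have h2 := hkey t ht
    calc ‖iteratedDeriv n u t‖ * t⁻¹
        ≤ ((C * Real.exp c * Real.exp (-c * t)) * t) * t⁻¹ :=
          mul_le_mul_of_nonneg_right h2 (by positivity)
      _ = (C * Real.exp c) * Real.exp (-c * t) := by
          field_simp
  have hInt : IntegrableOn (fun t : ℝ => iteratedDeriv n u t * (t:ℂ)⁻¹)
      (Set.Ioi (0:ℝ)) := by
    refine hDint.mono' hmeas0 ?_
    filter_upwards [ae_restrict_mem measurableSet_Ioi] with t ht
    exact hbnd0 t ht
  refine ⟨hInt, ?_⟩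
  -- key identity for ε > 0
  have hπc : ((Real.pi:ℝ):ℂ) ≠ 0 := by exact_mod_cast ne_of_gt hπ
  have key : ∀ ε : ℝ, 0 < ε →
      (∫ t in Set.Ioi (0:ℝ), K ((n:ℕ):ℂ) ε t * u t)
        = ((-1:ℂ)^(m+1) / (Real.pi:ℂ)) *
          ∫ t in Set.Ioi (0:ℝ), iteratedDeriv n u t * ((t:ℂ)/(((ε^2 + t^2 : ℝ)):ℂ)) := by
    intro ε hε
    set S : ℕ → ℂ := fun j => ∫ t in Set.Ioi (0:ℝ),
      (((-I)^j) * ((ε:ℂ) + I * (t:ℂ)) ^ (-((n+1-j:ℕ):ℤ))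
        + (I^j) * ((ε:ℂ) + (-I) * (t:ℂ)) ^ (-((n+1-j:ℕ):ℤ))) * iteratedDeriv j u t with hS
    have claim : ∀ j, j ≤ n →
        S 0 = (((n-j).factorial : ℂ) / ((n.factorial : ℕ) : ℂ)) * S j := by
      intro j
      induction j with
      | zero =>
        intro _
        rw [Nat.sub_zero, div_self (by exact_mod_cast Nat.factorial_ne_zero n), one_mul]
      | succ j ih =>
        intro hj
        have hj' : j ≤ n := by omega
        have hk1 : 1 ≤ n - j := by omega
        have hkj : n + 1 - j = (n - j) + 1 := by omega
        have hkj2 : n + 1 - (j+1) = n - j := by omega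
        have hk0 : ((n - j : ℕ):ℂ) ≠ 0 := Nat.cast_ne_zero.mpr (by omega)
        have hds := double_step hε hc hk1 (fun t => hder j (by omega) t)
          (hcontj (j+1) (by omega)) (fun t ht => hbound j (by omega) t ht)
          (fun t ht => hbound (j+1) (by omega) t ht) ((-I)^j) (I^j)
        have e1 : S j = ∫ t in Set.Ioi (0:ℝ),
            (((-I)^j) * ((ε:ℂ) + I * (t:ℂ)) ^ (-(((n-j)+1:ℕ):ℤ))
              + (I^j) * ((ε:ℂ) + (-I) * (t:ℂ)) ^ (-(((n-j)+1:ℕ):ℤ)))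
              * iteratedDeriv j u t := by
          rw [hS]; simp only [hkj]
        have e2 : S (j+1) = ∫ t in Set.Ioi (0:ℝ),
            (((-I)^j * (-I)) * ((ε:ℂ) + I * (t:ℂ)) ^ (-((n-j:ℕ):ℤ))
              + ((I^j) * I) * ((ε:ℂ) + (-I) * (t:ℂ)) ^ (-((n-j:ℕ):ℤ)))
              * iteratedDeriv (j+1) u t := by
          rw [hS]; simp only [hkj2, pow_succ]
        have hbdry : ((((-I):ℂ)^j * (-I) + (I^j) * I) / ((n-j:ℕ):ℂ))
            * (ε:ℂ)^(-((n-j:ℕ):ℤ)) * iteratedDeriv j u 0 = 0 := by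
          rcases Nat.even_or_odd j with he | ho
          · rw [he.neg_pow]; ring
          · rw [hodd j ho (by omega)]; ring
        have hstep : S j = (1/((n-j:ℕ):ℂ)) * S (j+1) := by
          rw [e1, hds, hbdry, zero_add, ← e2]
        have hfac : (((n-j).factorial : ℕ) : ℂ)
            = ((n-j:ℕ):ℂ) * (((n-(j+1)).factorial : ℕ):ℂ) := by
          have h3 : (n-j) * ((n-j)-1).factorial = (n-j).factorial :=
            Nat.mul_factorial_pred (by omega)
          have h4 : n - (j+1) = (n-j) - 1 := by omega
          rw [h4, ← h3]; push_cast; ring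
        rw [ih hj', hstep, hfac]
        have coeff : ∀ (a b f s : ℂ), a ≠ 0 → a * b / f * (1 / a * s) = b / f * s := by
          intro a b f s ha
          rw [one_div, mul_comm a b, mul_div_assoc b a f, mul_assoc,
            ← mul_assoc (a/f) a⁻¹ s, div_mul_eq_mul_div, mul_inv_cancel₀ ha]
          ring
        exact coeff _ _ _ _ hk0
    -- final pointwise kernel identity
    have hSn : S n = ((-1:ℂ)^(m+1) * 2) *
        ∫ t in Set.Ioi (0:ℝ), iteratedDeriv n u t * ((t:ℂ)/(((ε^2 + t^2 : ℝ)):ℂ)) := by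
      rw [hS, ← integral_const_mul]
      apply setIntegral_congr_fun measurableSet_Ioi
      intro t ht
      have ht0 : (0:ℝ) < t := ht
      have hsub : n + 1 - n = 1 := by omega
      have hz1 : (ε:ℂ) + I * t ≠ 0 := z_ne hε (by simp) t
      have hz2 : (ε:ℂ) + (-I) * t ≠ 0 := z_ne hε (by simp) t
      have hdenR : (0:ℝ) < ε^2 + t^2 := by positivity
      have hden : ((ε^2 + t^2 : ℝ):ℂ) ≠ 0 := by exact_mod_cast ne_of_gt hdenR
      have hIpow : (I:ℂ)^n = (-1)^m * I := by
        rw [hn, pow_succ, pow_mul, Complex.I_sq]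
      have hIpow2 : ((-I):ℂ)^n = -((-1:ℂ)^m * I) := by
        rw [Odd.neg_pow ⟨m, by omega⟩, hIpow]
      have h1 : ((ε:ℂ) + I*t)⁻¹ = ((ε:ℂ) + (-I)*t) / ((ε^2+t^2:ℝ):ℂ) := by
        rw [eq_div_iff hden, inv_mul_eq_div, div_eq_iff hz1]
        push_cast
        linear_combination ((t:ℂ)^2) * Complex.I_sq
      have h2 : ((ε:ℂ) + (-I)*t)⁻¹ = ((ε:ℂ) + I*t) / ((ε^2+t^2:ℝ):ℂ) := by
        rw [eq_div_iff hden, inv_mul_eq_div, div_eq_iff hz2]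
        push_cast
        linear_combination ((t:ℂ)^2) * Complex.I_sq
      simp only [hsub, Nat.cast_one, zpow_neg, zpow_one]
      rw [hIpow, hIpow2, h1, h2]
      linear_combination (2 * (-1:ℂ)^m * (t:ℂ) * iteratedDeriv n u t
        / ((ε^2+t^2:ℝ):ℂ)) * Complex.I_sq
    -- express the K-integral via S 0
    have hK : (∫ t in Set.Ioi (0:ℝ), K ((n:ℕ):ℂ) ε t * u t)
        = (((n.factorial:ℕ):ℂ)/(2*(Real.pi:ℂ))) * S 0 := by
      rw [hS, ← integral_const_mul]
      apply setIntegral_congr_fun measurableSet_Ioi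
      intro t _
      simp only [K, pow_zero, one_mul, Nat.sub_zero]
      have hg : Complex.Gamma (1 + ((n:ℕ):ℂ)) = ((n.factorial : ℕ):ℂ) := by
        rw [add_comm]
        exact_mod_cast Complex.Gamma_nat_eq_factorial n
      have hc1 : (-(((n:ℕ):ℂ) + 1)) = ((-((n+1:ℕ):ℤ) : ℤ) : ℂ) := by push_cast; ring
      have hcp1 : ((ε:ℂ) + I * t) ^ (-(((n:ℕ):ℂ)+1))
          = ((ε:ℂ) + I * t) ^ (-((n+1:ℕ):ℤ)) := by
        rw [hc1, Complex.cpow_intCast]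
      have hcp2 : ((ε:ℂ) - I * t) ^ (-(((n:ℕ):ℂ)+1))
          = ((ε:ℂ) + (-I) * t) ^ (-((n+1:ℕ):ℤ)) := by
        rw [show (ε:ℂ) - I * t = (ε:ℂ) + (-I) * t by ring, hc1, Complex.cpow_intCast]
      rw [hcp1, hcp2, hg]
      simp only [iteratedDeriv_zero]
      ring
    have hfac0 : ((n.factorial:ℕ):ℂ) ≠ 0 := by
      exact_mod_cast Nat.factorial_ne_zero n
    have harith : ∀ s : ℂ, (((n.factorial:ℕ):ℂ)/(2*(Real.pi:ℂ)))
        * ((1:ℂ)/((n.factorial:ℕ):ℂ) * (((-1:ℂ)^(m+1) * 2) * s))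
        = ((-1:ℂ)^(m+1) / (Real.pi:ℂ)) * s := by
      intro s
      field_simp
    rw [hK, claim n le_rfl, Nat.sub_self, Nat.factorial_zero, Nat.cast_one, hSn]
    exact harith _
  -- dominated convergence
  have hbnd : ∀ ε : ℝ, ∀ t : ℝ, 0 < t →
      ‖iteratedDeriv n u t * ((t:ℂ)/(((ε^2 + t^2 : ℝ)):ℂ))‖
        ≤ (C * Real.exp c) * Real.exp (-c*t) := by
    intro ε t ht
    have hdenR : (0:ℝ) < ε^2 + t^2 := by positivity
    rw [norm_mul, norm_div, Complex.norm_real, Complex.norm_real, Real.norm_eq_abs,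
      Real.norm_eq_abs, _root_.abs_of_pos ht, _root_.abs_of_pos hdenR]
    have h2 := hkey t ht
    have hle : t / (ε^2+t^2) ≤ t⁻¹ := by
      have h3 : t / (ε^2+t^2) ≤ t / t^2 :=
        div_le_div_of_nonneg_left ht.le (by positivity) (by nlinarith)
      have h4 : t / t^2 = t⁻¹ := by
        field_simp
      linarith [h3, h4.le]
    calc ‖iteratedDeriv n u t‖ * (t/(ε^2+t^2))
        ≤ ((C * Real.exp c * Real.exp (-c * t)) * t) * t⁻¹ :=
          mul_le_mul h2 hle (by positivity) (by positivity)
      _ = (C * Real.exp c) * Real.exp (-c*t) := by field_simp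
  have hDCT : Filter.Tendsto
      (fun ε : ℝ => ∫ t in Set.Ioi (0:ℝ),
        iteratedDeriv n u t * ((t:ℂ)/(((ε^2 + t^2 : ℝ)):ℂ)))
      (nhdsWithin 0 (Set.Ioi 0))
      (nhds (∫ t in Set.Ioi (0:ℝ), iteratedDeriv n u t * (t:ℂ)⁻¹)) := by
    apply tendsto_integral_filter_of_dominated_convergence
      (bound := fun t => (C * Real.exp c) * Real.exp (-c*t))
    · exact Filter.Eventually.of_forall hmeas
    · apply Filter.Eventually.of_forall
      intro ε
      filter_upwards [ae_restrict_mem measurableSet_Ioi] with t ht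
      exact hbnd ε t ht
    · exact hDint
    · filter_upwards [ae_restrict_mem measurableSet_Ioi] with t ht
      have ht0 : (0:ℝ) < t := ht
      have htC : Filter.Tendsto (fun ε : ℝ => ((t:ℂ)/(((ε^2 + t^2 : ℝ)):ℂ)))
          (nhdsWithin 0 (Set.Ioi 0)) (nhds ((t:ℂ)⁻¹)) := by
        have hcont : ContinuousAt (fun ε : ℝ => ((t:ℂ)/(((ε^2 + t^2 : ℝ)):ℂ))) 0 := by
          apply ContinuousAt.div continuousAt_const
          · exact Complex.continuous_ofReal.continuousAt.comp (by fun_prop)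
          · show ((((0:ℝ)^2 + t^2 :ℝ)):ℂ) ≠ 0
            have : (0:ℝ) < (0:ℝ)^2 + t^2 := by positivity
            exact_mod_cast ne_of_gt this
        have h5 : Filter.Tendsto (fun ε : ℝ => ((t:ℂ)/(((ε^2 + t^2 : ℝ)):ℂ)))
            (nhdsWithin 0 (Set.Ioi 0)) (nhds ((t:ℂ)/((((0:ℝ)^2 + t^2 : ℝ)):ℂ))) :=
          hcont.tendsto.mono_left nhdsWithin_le_nhds
        have h6 : ((t:ℂ)/((((0:ℝ)^2 + t^2 : ℝ)):ℂ)) = (t:ℂ)⁻¹ := by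
          have ht' : (t:ℂ) ≠ 0 := by exact_mod_cast ne_of_gt ht0
          push_cast
          field_simp
          ring
        rwa [h6] at h5
      exact htC.const_mul _
  have hfinal := hDCT.const_mul (((-1:ℂ))^(m+1) / (Real.pi:ℂ))
  apply Filter.Tendsto.congr' _ hfinal
  filter_upwards [self_mem_nhdsWithin] with ε hε
  exact (key ε hε).symm
end
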